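/- arXiv:2108.13631 — 9 statements merged into one kernel-verified Lean document; each statement's English description precedes it below -/
import Mathlib

section
/- For every natural number $n$, the identity of polynomials $V_n(x) = \frac{2^{n}}{\binom{2n}{n}} \sum_{m=0}^{n} (-1)^{n-m} \Big( \sum_{l=0}^{n-m} 2^{l} \frac{(1+n)_{n-l}\,(\tfrac{1}{2}-n)_{l}}{(n-l-m)!\, m!\, l!} \Big) x^m$ holds in $\mathbb{R}[x]$. -/
open Polynomial Finset

/-- The Jacobi polynomial `P_n^{(a,b)}`, defined by
`P_n^{(a,b)}(z) = ∑_{l=0}^n (n+a+b+1)_l (a+l+1)_{n-l} / (l! (n-l)!) ((z-1)/2)^l`. -/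
noncomputable def jacobiP (a b : ℝ) (n : ℕ) : ℝ[X] :=
  ∑ l ∈ range (n + 1),
    C (((ascPochhammer ℝ l).eval ((n : ℝ) + a + b + 1) *
        (ascPochhammer ℝ (n - l)).eval (a + l + 1)) /
       (l.factorial * (n - l).factorial)) * (C (1 / 2) * (X - 1)) ^ l

/-- The Chebyshev polynomial of the third kind, `V_n(x) = 2^{2n}/C(2n,n) ⬝ P_n^{(-1/2,1/2)}(x)`. -/
noncomputable def chebV (n : ℕ) : ℝ[X] :=
  C ((2 : ℝ) ^ (2 * n) / ((2 * n).choose n : ℝ)) * jacobiP (-(1 / 2)) (1 / 2) n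

/-- The Chebyshev polynomial of the fourth kind, `W_n(x) = 2^{2n}/C(2n,n) ⬝ P_n^{(1/2,-1/2)}(x)`. -/
noncomputable def chebW (n : ℕ) : ℝ[X] :=
  C ((2 : ℝ) ^ (2 * n) / ((2 * n).choose n : ℝ)) * jacobiP (1 / 2) (-(1 / 2)) n

/-- Swap and reflect a triangular double sum. -/
lemma sum_swap_reflect {M : Type*} [AddCommMonoid M] (n : ℕ) (f : ℕ → ℕ → M) :
    ∑ l ∈ range (n + 1), ∑ m ∈ range (l + 1), f l m
      = ∑ m ∈ range (n + 1), ∑ k ∈ range (n - m + 1), f (n - k) m := by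
  rw [Finset.sum_sigma', Finset.sum_sigma']
  refine Finset.sum_nbij' (i := fun x => Sigma.mk x.snd (n - x.fst))
    (j := fun x => Sigma.mk (n - x.snd) x.fst) ?_ ?_ ?_ ?_ ?_
  · rintro ⟨a, b⟩ h
    simp only [Finset.mem_sigma, Finset.mem_range] at h ⊢
    omega
  · rintro ⟨a, b⟩ h
    simp only [Finset.mem_sigma, Finset.mem_range] at h ⊢
    omega
  · rintro ⟨a, b⟩ h
    simp only [Finset.mem_sigma, Finset.mem_range] at h
    simp only [show n - (n - a) = a from by omega]
  · rintro ⟨a, b⟩ h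
    simp only [Finset.mem_sigma, Finset.mem_range] at h
    simp only [show n - (n - b) = b from by omega]
  · rintro ⟨a, b⟩ h
    simp only [Finset.mem_sigma, Finset.mem_range] at h
    simp only [show n - (n - a) = a from by omega]

theorem chebV_in_monomials (n : ℕ) :
    chebV n =
      C ((2 : ℝ) ^ n / ((2 * n).choose n : ℝ)) *
        ∑ m ∈ range (n + 1),
          C ((-1 : ℝ) ^ (n - m) *
             ∑ l ∈ range (n - m + 1),
               2 ^ l * ((ascPochhammer ℝ (n - l)).eval (1 + (n : ℝ)) *
                        (ascPochhammer ℝ l).eval (1 / 2 - (n : ℝ))) /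
               ((n - l - m).factorial * m.factorial * l.factorial)) * X ^ m := by
  have hL : chebV n = ∑ l ∈ range (n + 1), ∑ m ∈ range (l + 1),
      C (((2 : ℝ) ^ (2 * n) / ((2 * n).choose n : ℝ)) *
          (((ascPochhammer ℝ l).eval ((n : ℝ) + -(1 / 2) + 1 / 2 + 1) *
            (ascPochhammer ℝ (n - l)).eval (-(1 / 2) + (l : ℝ) + 1)) /
           (l.factorial * (n - l).factorial)) *
          ((1 / 2 : ℝ) ^ l * ((-1 : ℝ) ^ (m + l) * (l.choose m : ℝ)))) * X ^ m := by
    rw [chebV, jacobiP, Finset.mul_sum]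
    refine Finset.sum_congr rfl fun l hl => ?_
    rw [mul_pow, ← C_pow, sub_pow X 1 l, Finset.mul_sum, Finset.mul_sum, Finset.mul_sum]
    refine Finset.sum_congr rfl fun m hm => ?_
    simp only [one_pow, mul_one, map_mul, map_pow, map_neg, map_one, map_div₀, C_eq_natCast]
    ring
  rw [hL, sum_swap_reflect, Finset.mul_sum]
  refine Finset.sum_congr rfl fun m hm => ?_
  rw [Finset.mem_range] at hm
  conv_rhs => rw [Finset.mul_sum, map_sum, Finset.sum_mul, Finset.mul_sum]
  refine Finset.sum_congr rfl fun k hk => ?_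
  rw [Finset.mem_range] at hk
  conv_rhs => rw [← mul_assoc, ← C_mul]
  congr 1
  rw [C_inj]
  -- now a real-number identity
  obtain ⟨d, rfl⟩ : ∃ d, n = m + k + d := ⟨n - m - k, by omega⟩
  simp only [show m + k + d - k = m + d from by omega,
    show m + k + d - (m + d) = k from by omega, show m + d - m = d from by omega,
    show m + k + d - m = k + d from by omega]
  have harg1 : ((m + k + d : ℕ) : ℝ) + -(1 / 2) + 1 / 2 + 1 = 1 + ((m + k + d : ℕ) : ℝ) := by
    ring
  have harg2 : (-(1 / 2) : ℝ) + ((m + d : ℕ) : ℝ) + 1 = ((m + d : ℕ) : ℝ) + 1 / 2 := by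
    push_cast; ring
  rw [harg1, harg2]
  have hsign : (ascPochhammer ℝ k).eval (1 / 2 - ((m + k + d : ℕ) : ℝ))
      = (-1) ^ k * (ascPochhammer ℝ k).eval (((m + d : ℕ) : ℝ) + 1 / 2) := by
    rw [show (1 / 2 - ((m + k + d : ℕ) : ℝ)) = -(((m + k + d : ℕ) : ℝ) - 1 / 2) by ring,
      ascPochhammer_eval_neg_eq_descPochhammer, descPochhammer_eval_eq_ascPochhammer]
    congr 2
    push_cast
    ring
  have hB : (ascPochhammer ℝ k).eval (((m + d : ℕ) : ℝ) + 1 / 2)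
      = (-1) ^ k * (ascPochhammer ℝ k).eval (1 / 2 - ((m + k + d : ℕ) : ℝ)) := by
    rw [hsign, ← mul_assoc, ← pow_add, show k + k = 2 * k by ring, pow_mul]
    norm_num
  rw [hB]
  have hch : (((m + d).choose m : ℕ) : ℝ) = ((m + d).factorial : ℝ) /
      ((m.factorial : ℝ) * (d.factorial : ℝ)) := by
    rw [Nat.cast_choose ℝ (Nat.le_add_right m d), Nat.add_sub_cancel_left]
  rw [hch]
  rw [show m + (m + d) = 2 * m + d by ring, pow_add (-1 : ℝ) (2 * m) d, pow_mul]
  rw [pow_add (-1 : ℝ) k d]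
  norm_num
  have hCC : (((2 * (m + k + d)).choose (m + k + d) : ℕ) : ℝ) ≠ 0 := by
    exact_mod_cast (Nat.choose_pos (by omega)).ne'
  have hfm : (m.factorial : ℝ) ≠ 0 := by exact_mod_cast m.factorial_ne_zero
  have hfk : (k.factorial : ℝ) ≠ 0 := by exact_mod_cast k.factorial_ne_zero
  have hfd : (d.factorial : ℝ) ≠ 0 := by exact_mod_cast d.factorial_ne_zero
  have hfmd : ((m + d).factorial : ℝ) ≠ 0 := by exact_mod_cast (m + d).factorial_ne_zero
  field_simp
  ring_nf
  simp only [show ∀ j : ℕ, (2:ℝ) ^ (j * 2) = 4 ^ j from fun j => by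
    rw [mul_comm j 2, pow_mul]; norm_num]
  have h4 : ∀ j : ℕ, (1 / 2 : ℝ) ^ j * 4 ^ j = 2 ^ j := fun j => by rw [← mul_pow]; norm_num
  rw [← h4 m, ← h4 d]
  ring
end

section
/- For every natural number $n$, the identity of polynomials $W_n(x) = \frac{2^{n}}{\binom{2n}{n}} \sum_{m=0}^{n} (-1)^{n-m} \Big( \sum_{l=0}^{n-m} 2^{l} \frac{(1+n)_{n-l}\,(-\tfrac{1}{2}-n)_{l}}{(n-l-m)!\, m!\, l!} \Big) x^m$ holds in $\mathbb{R}[x]$. -/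
open Polynomial Finset

/-- Reflection identity for the rising factorial:
`(x - l + 1)_l = (-1)^l ⬝ (-x)_l`. -/
lemma asc_reflect (l : ℕ) (x : ℝ) :
    (ascPochhammer ℝ l).eval (x - l + 1) = (-1)^l * (ascPochhammer ℝ l).eval (-x) := by
  induction l with
  | zero => simp
  | succ l ih =>
    conv_lhs => rw [ascPochhammer_succ_left]
    conv_rhs => rw [ascPochhammer_succ_right]
    simp only [eval_mul, eval_comp, eval_add, eval_X, eval_one, eval_natCast]
    push_cast
    have h1 : x - (↑l + 1) + 1 + 1 = x - ↑l + 1 := by ring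
    have h2 : x - (↑l + 1) + 1 = x - ↑l := by ring
    rw [h1, h2, ih]
    ring

/-- The scalar identity comparing coefficients. -/
lemma key_eq (n m l : ℕ) (hm : m ≤ n) (hl : l ≤ n - m)
    (P Q K : ℝ) (hK : K ≠ 0) :
    (2:ℝ)^(2*n) / K * (P * ((-1:ℝ)^l * Q) / ((n-l).factorial * l.factorial)) *
      ((1/2:ℝ)^(n-l) * ((-1:ℝ)^(m+(n-l)) * ((n-l).choose m : ℝ)))
    = (-1:ℝ)^(n-m) * (2^l * (P * Q) / ((n-l-m).factorial * m.factorial * l.factorial)) *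
      ((2:ℝ)^n / K) := by
  have hmn : m ≤ n - l := by omega
  have hfac : (((n-l).choose m : ℝ)) * m.factorial * (n-l-m).factorial = ((n-l).factorial : ℝ) := by
    exact_mod_cast congrArg (Nat.cast (R := ℝ)) (Nat.choose_mul_factorial_mul_factorial hmn)
  have hsign : (-1:ℝ)^l * (-1:ℝ)^m * (-1:ℝ)^(n-l) = (-1:ℝ)^(n-m) := by
    rw [← pow_add, ← pow_add, show l + m + (n-l) = (n-m) + 2*m by omega, pow_add, pow_mul]
    norm_num
  have hpow : (2:ℝ)^(2*n) = 2^n * 2^l * 2^(n-l) := by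
    rw [← pow_add, ← pow_add]; congr 1; omega
  have h1 : ((n-l).factorial : ℝ) ≠ 0 := Nat.cast_ne_zero.2 (Nat.factorial_ne_zero _)
  have h2 : (l.factorial : ℝ) ≠ 0 := Nat.cast_ne_zero.2 (Nat.factorial_ne_zero _)
  have h3 : (m.factorial : ℝ) ≠ 0 := Nat.cast_ne_zero.2 (Nat.factorial_ne_zero _)
  have h4 : ((n-l-m).factorial : ℝ) ≠ 0 := Nat.cast_ne_zero.2 (Nat.factorial_ne_zero _)
  have h5 : (((n-l).choose m : ℝ)) ≠ 0 := Nat.cast_ne_zero.2 (Nat.choose_pos hmn).ne'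
  rw [hpow, ← hsign, ← hfac, one_div_pow]
  field_simp
  ring

theorem chebW_in_monomials (n : ℕ) :
    chebW n =
      C ((2 : ℝ) ^ n / ((2 * n).choose n : ℝ)) *
        ∑ m ∈ range (n + 1),
          C ((-1 : ℝ) ^ (n - m) *
             ∑ l ∈ range (n - m + 1),
               2 ^ l * ((ascPochhammer ℝ (n - l)).eval (1 + (n : ℝ)) *
                        (ascPochhammer ℝ l).eval (-(1 / 2) - (n : ℝ))) /
               ((n - l - m).factorial * m.factorial * l.factorial)) * X ^ m := by
  have hK : ((2 * n).choose n : ℝ) ≠ 0 :=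
    Nat.cast_ne_zero.2 (Nat.choose_pos (by omega)).ne'
  set K : ℝ := ((2 * n).choose n : ℝ) with hKdef
  set g : ℕ → ℕ → ℝ := fun l m =>
    (2:ℝ)^(2*n) / K *
      (((ascPochhammer ℝ l).eval ((n:ℝ) + 1/2 + -(1/2) + 1) *
        (ascPochhammer ℝ (n-l)).eval (1/2 + (l:ℝ) + 1)) / (l.factorial * (n-l).factorial)) *
      ((1/2:ℝ)^l * ((-1:ℝ)^(m+l) * (l.choose m : ℝ))) with hg
  have stepA : chebW n = ∑ l ∈ range (n+1), ∑ m ∈ range (n+1), C (g l m) * X ^ m := by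
    rw [chebW, jacobiP, Finset.mul_sum]
    refine Finset.sum_congr rfl fun l hl => ?_
    rw [mul_pow, ← C_pow, sub_pow]
    rw [Finset.mul_sum, Finset.mul_sum, Finset.mul_sum]
    rw [show range (n+1) = range (l+1) ∪ (range (n+1) \ range (l+1)) by
      rw [Finset.union_sdiff_of_subset (Finset.range_subset_range.2 (by simp at hl; omega))]]
    rw [Finset.sum_union (Finset.disjoint_sdiff)]
    have hz : ∑ m ∈ range (n+1) \ range (l+1), C (g l m) * X ^ m = 0 := by
      refine Finset.sum_eq_zero fun m hm => ?_
      simp only [Finset.mem_sdiff, Finset.mem_range] at hm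
      have : l.choose m = 0 := Nat.choose_eq_zero_of_lt (by omega)
      simp [hg, this]
    rw [hz, add_zero]
    refine Finset.sum_congr rfl fun m hm => ?_
    simp only [hg, one_pow, mul_one, map_mul, map_pow, map_neg, map_one, map_div₀,
      C_eq_natCast]
    ring
  rw [stepA, Finset.sum_comm, Finset.mul_sum]
  refine Finset.sum_congr rfl fun m hm => ?_
  have hm' : m ≤ n := by
    have := Finset.mem_range.mp hm; omega
  rw [← Finset.sum_mul, ← map_sum, ← mul_assoc, ← C_mul]
  congr 2
  rw [← Finset.sum_range_reflect]
  simp only [Nat.add_sub_cancel]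
  rw [← Finset.sum_subset (Finset.range_subset_range.2 (show n - m + 1 ≤ n + 1 by omega))
    (fun x hx hx' => by
      simp only [Finset.mem_range] at hx hx'
      have : n - x < m := by omega
      have hc : (n - x).choose m = 0 := Nat.choose_eq_zero_of_lt this
      simp [hg, hc])]
  rw [Finset.mul_sum, Finset.mul_sum]
  refine Finset.sum_congr rfl fun l hl => ?_
  have hl' : l ≤ n - m := by
    have := Finset.mem_range.mp hl; omega
  have e1 : n - (n - l) = l := by omega
  have e2 : ((n:ℝ) + 1/2 + -(1/2) + 1) = 1 + (n:ℝ) := by ring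
  have e3 : (1/2 + ((n - l : ℕ):ℝ) + 1) = ((n:ℝ) + 1/2) - (l:ℝ) + 1 := by
    rw [Nat.cast_sub (by omega)]; ring
  have e4 : (-((n:ℝ) + 1/2)) = -(1/2) - (n:ℝ) := by ring
  simp only [hg, e1, e2, e3, asc_reflect l ((n:ℝ) + 1/2), e4]
  linear_combination key_eq n m l hm' hl'
    ((ascPochhammer ℝ (n - l)).eval (1 + (n:ℝ)))
    ((ascPochhammer ℝ l).eval (-(1/2) - (n:ℝ))) K hK
end

section
/- For every natural number $n$, the identity of polynomials $x^n = \sum_{m=0}^{n} \Big( \sum_{l=0}^{n-m} \frac{(-1)^{l}\,(2(n-l)+1)!!\; n!}{(n-l-m)!\,(n-l+m+1)!\, l!} \Big) V_m(x)$ holds in $\mathbb{R}[x]$. -/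
open Polynomial Finset

lemma F1 (l i : ℕ) : (i+1) * (2*l+i+1).choose (2*l) = (2*l+i+1) * (2*l+i).choose (2*l) := by
  have h1 : (2*l+i).choose (2*l) = (2*l+i).choose i := by
    rw [← Nat.choose_symm (by omega : i ≤ 2*l+i)]; congr 1; omega
  have h2 : (2*l+i+1).choose (2*l) = (2*l+i+1).choose (i+1) := by
    rw [← Nat.choose_symm (by omega : i+1 ≤ 2*l+i+1)]; congr 1; omega
  have h3 := Nat.add_one_mul_choose_eq (2*l+i) i
  rw [h1, h2, mul_comm]; exact h3.symm

lemma F3 (l i : ℕ) : (2*l+i+1) * i * (2*l+i).choose (2*l)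
    = (2*l+1) * (2*l+2) * (2*l+i+1).choose (2*l+2) := by
  have h1 := Nat.choose_succ_right_eq (2*l+i+1) (2*l+1)
  have h2 := Nat.choose_succ_right_eq (2*l+i+1) (2*l)
  have h3 := F1 l i
  have e1 : 2*l+i+1 - (2*l+1) = i := by omega
  have e2 : 2*l+i+1 - 2*l = i+1 := by omega
  rw [e1] at h1; rw [e2] at h2
  nlinarith [h1, h2, h3]

private lemma local_core (l N i : ℕ) (A A' B B' : ℤ)
    (h1 : ((i:ℤ)+1)*A' = (2*(l:ℤ)+i+1)*A)
    (h2 : B'*((l:ℤ)+N+1+l+i+2) = B*((N:ℤ)+1-i)) :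
    (2*(2*(l:ℤ)+i+1)*i - ((N:ℤ)+1)*(2*(l:ℤ)+1)) * (A*B)
      = -((i:ℤ)+1)*((l:ℤ)+N+1+l+(i+1)+1)*(A'*B') - (-(i:ℤ)*((l:ℤ)+N+1+l+i+1)*(A*B)) := by
  linear_combination (((l:ℤ)+N+1+l+i+2)*B') * h1 + ((2*(l:ℤ)+i+1)*A) * h2

lemma key (l : ℕ) : ∀ N : ℕ,
    ∑ i ∈ range (N+1), (2*l+i).choose (2*l) * (2*(l+N)+1).choose (N-i)
      = 4^N * (l+N).choose l := by
  induction l with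
  | zero =>
    intro N
    simp only [Nat.zero_add, Nat.mul_zero, Nat.choose_zero_right, one_mul, Nat.zero_eq]
    have : ∑ i ∈ range (N+1), (2*N+1).choose (N-i)
        = ∑ i ∈ range (N+1), (2*N+1).choose i := by
      rw [← Finset.sum_range_reflect]
      apply Finset.sum_congr rfl
      intro i hi
      have := mem_range.mp hi
      congr 1; omega
    rw [this, Nat.sum_range_choose_halfway]
    simp
  | succ l ih =>
    intro N
    have tele : ∑ i ∈ range (N+2),
        ((2*(2*(l:ℤ)+i+1)*i - ((N:ℤ)+1)*(2*(l:ℤ)+1)) *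
          (((2*l+i).choose (2*l) : ℤ) * ((2*(l+N+1)+1).choose ((l+N+1)+l+i+1) : ℤ))) = 0 := by
      have htel := Finset.sum_range_sub
        (f := fun i => -(i:ℤ) * ((l:ℤ)+N+1+l+i+1) *
          (((2*l+i).choose (2*l) : ℤ) * ((2*(l+N+1)+1).choose ((l+N+1)+l+i+1) : ℤ))) (N+2)
      rw [Finset.sum_congr rfl (fun i hi => ?_), htel]
      · have hz : (2*(l+N+1)+1).choose ((l+N+1)+l+(N+2)+1) = 0 :=
          Nat.choose_eq_zero_of_lt (by omega)
        rw [hz]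
        push_cast
        ring
      · have hiN : i ≤ N+1 := by have := mem_range.mp hi; omega
        have hF1 := F1 l i
        have h1 : ((i:ℤ)+1) * ((2*l+i+1).choose (2*l) : ℤ)
            = (2*(l:ℤ)+i+1) * ((2*l+i).choose (2*l) : ℤ) := by exact_mod_cast hF1
        have hF2 := Nat.choose_succ_right_eq (2*(l+N+1)+1) ((l+N+1)+l+i+1)
        rw [show ((l+N+1)+l+i+1)+1 = (l+N+1)+l+i+2 from by omega,
            show 2*(l+N+1)+1 - ((l+N+1)+l+i+1) = N+1-i from by omega] at hF2
        have h2 : ((2*(l+N+1)+1).choose ((l+N+1)+l+i+2) : ℤ) * ((l:ℤ)+N+1+l+i+2)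
            = ((2*(l+N+1)+1).choose ((l+N+1)+l+i+1) : ℤ) * ((N:ℤ)+1-i) := by
          have h := congrArg (Nat.cast (R := ℤ)) hF2
          push_cast [Nat.cast_sub (show i ≤ N+1 by omega)] at h
          linear_combination h
        have hmain := local_core l N i _ _ _ _ h1 h2
        push_cast
        rw [show (l+N+1)+l+(i+1)+1 = (l+N+1)+l+i+2 from by omega,
            show 2*l+(i+1) = 2*l+i+1 from by omega]
        push_cast
        linear_combination hmain
    -- B-sum via induction hypothesis
    have hB : ∑ i ∈ range (N+2),
        (((2*l+i).choose (2*l) : ℤ) * ((2*(l+N+1)+1).choose ((l+N+1)+l+i+1) : ℤ))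
        = 4^(N+1) * ((l+N+1).choose l : ℤ) := by
      have hih := ih (N+1)
      rw [show l+(N+1) = l+N+1 from by omega] at hih
      calc ∑ i ∈ range (N+2),
          (((2*l+i).choose (2*l) : ℤ) * ((2*(l+N+1)+1).choose ((l+N+1)+l+i+1) : ℤ))
          = ∑ i ∈ range (N+2),
            (((2*l+i).choose (2*l) : ℤ) * ((2*(l+N+1)+1).choose (N+1-i) : ℤ)) := by
            apply Finset.sum_congr rfl
            intro i hi
            have hiN : i ≤ N+1 := by have := mem_range.mp hi; omega
            congr 2
            rw [← Nat.choose_symm (show (l+N+1)+l+i+1 ≤ 2*(l+N+1)+1 by omega)]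
            congr 1
            omega
        _ = 4^(N+1) * ((l+N+1).choose l : ℤ) := by exact_mod_cast hih
    -- A-sum via F3 and reindexing
    have hA : ∑ i ∈ range (N+2),
        ((2*(l:ℤ)+i+1)*i * (((2*l+i).choose (2*l) : ℤ) *
          ((2*(l+N+1)+1).choose ((l+N+1)+l+i+1) : ℤ)))
        = (2*(l:ℤ)+1)*(2*(l:ℤ)+2) *
          ∑ i ∈ range (N+1), (((2*(l+1)+i).choose (2*(l+1)) : ℤ) *
            ((2*((l+1)+N)+1).choose (N-i) : ℤ)) := by
      calc ∑ i ∈ range (N+2),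
          ((2*(l:ℤ)+i+1)*i * (((2*l+i).choose (2*l) : ℤ) *
            ((2*(l+N+1)+1).choose ((l+N+1)+l+i+1) : ℤ)))
          = ∑ i ∈ range (N+2), ((2*(l:ℤ)+1)*(2*(l:ℤ)+2) *
              (((2*l+i+1).choose (2*l+2) : ℤ) *
               ((2*(l+N+1)+1).choose ((l+N+1)+l+i+1) : ℤ))) := by
            apply Finset.sum_congr rfl
            intro i hi
            have hF3 := congrArg (Nat.cast (R := ℤ)) (F3 l i)
            push_cast at hF3 ⊢
            linear_combination ((2*(l+N+1)+1).choose ((l+N+1)+l+i+1) : ℤ) * hF3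
        _ = (2*(l:ℤ)+1)*(2*(l:ℤ)+2) * ∑ i ∈ range (N+2),
              (((2*l+i+1).choose (2*l+2) : ℤ) *
               ((2*(l+N+1)+1).choose ((l+N+1)+l+i+1) : ℤ)) := by
            rw [Finset.mul_sum]
        _ = (2*(l:ℤ)+1)*(2*(l:ℤ)+2) *
            ∑ i ∈ range (N+1), (((2*(l+1)+i).choose (2*(l+1)) : ℤ) *
              ((2*((l+1)+N)+1).choose (N-i) : ℤ)) := by
            congr 1
            rw [Finset.sum_range_succ']
            have hz : (2*l+0+1).choose (2*l+2) = 0 := Nat.choose_eq_zero_of_lt (by omega)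
            rw [hz]
            push_cast
            rw [zero_mul, add_zero]
            apply Finset.sum_congr rfl
            intro j hj
            have hjN : j ≤ N := by have := mem_range.mp hj; omega
            congr 2
            · congr 1 <;> omega
            · rw [← Nat.choose_symm (show N-j ≤ 2*((l+1)+N)+1 by omega)]
              congr 1 <;> omega
    -- split the telescoped sum
    have hsplit : 2 * (∑ i ∈ range (N+2),
        ((2*(l:ℤ)+i+1)*i * (((2*l+i).choose (2*l) : ℤ) *
          ((2*(l+N+1)+1).choose ((l+N+1)+l+i+1) : ℤ))))
        = ((N:ℤ)+1)*(2*(l:ℤ)+1) * ∑ i ∈ range (N+2),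
        (((2*l+i).choose (2*l) : ℤ) * ((2*(l+N+1)+1).choose ((l+N+1)+l+i+1) : ℤ)) := by
      rw [Finset.mul_sum, Finset.mul_sum, ← sub_eq_zero, ← Finset.sum_sub_distrib]
      rw [← tele]
      apply Finset.sum_congr rfl
      intro i _
      ring
    -- assemble
    have hcs := Nat.choose_succ_right_eq (l+N+1) l
    rw [show l+N+1-l = N+1 from by omega] at hcs
    have hcsz : ((l+N+1).choose (l+1) : ℤ) * ((l:ℤ)+1)
        = ((l+N+1).choose l : ℤ) * ((N:ℤ)+1) := by exact_mod_cast hcs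
    have hT : ((4:ℤ)*((l:ℤ)+1)*(2*(l:ℤ)+1)) * (∑ i ∈ range (N+1),
          (((2*(l+1)+i).choose (2*(l+1)) : ℤ) * ((2*((l+1)+N)+1).choose (N-i) : ℤ)))
        = ((4:ℤ)*((l:ℤ)+1)*(2*(l:ℤ)+1)) * (4^N * ((l+N+1).choose (l+1) : ℤ)) := by
      rw [hA, hB] at hsplit
      linear_combination hsplit - (4^(N+1) * (2*(l:ℤ)+1)) * hcsz
    have hT2 := mul_left_cancel₀ (show ((4:ℤ)*((l:ℤ)+1)*(2*(l:ℤ)+1)) ≠ 0 by positivity) hT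
    rw [show l+1+N = l+N+1 from by omega] at hT2 ⊢
    exact_mod_cast hT2

lemma fact_ne' (k : ℕ) : ((k.factorial : ℝ)) ≠ 0 := by
  exact_mod_cast k.factorial_ne_zero

lemma sumT (l N : ℕ) :
    ∑ m ∈ Icc l (l+N), ((m+l).factorial : ℝ) /
        ((m-l).factorial * ((l+N)-m).factorial * ((l+N)+m+1).factorial)
      = 4^N * (2*l).factorial * (l+N).factorial /
        ((2*(l+N)+1).factorial * l.factorial * N.factorial) := by
  have hkeyR : (∑ i ∈ range (N+1),
      (((2*l+i).choose (2*l) : ℝ) * ((2*(l+N)+1).choose (N-i) : ℝ)))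
      = 4^N * ((l+N).choose l : ℝ) := by exact_mod_cast key l N
  rw [← Finset.Ico_add_one_right_eq_Icc, Finset.sum_Ico_eq_sum_range,
      show (l+N)+1-l = N+1 from by omega]
  have hper : ∀ i ∈ range (N+1), (((l+i)+l).factorial : ℝ) /
      (((l+i)-l).factorial * ((l+N)-(l+i)).factorial * ((l+N)+(l+i)+1).factorial)
      = (((2*l+i).choose (2*l) : ℝ) * ((2*(l+N)+1).choose (N-i) : ℝ))
        * ((2*l).factorial / (2*(l+N)+1).factorial) := by
    intro i hi
    have hiN : i ≤ N := by have := mem_range.mp hi; omega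
    rw [Nat.cast_choose ℝ (show 2*l ≤ 2*l+i by omega),
        Nat.cast_choose ℝ (show N-i ≤ 2*(l+N)+1 by omega),
        show 2*l+i-2*l = i from by omega,
        show 2*(l+N)+1-(N-i) = (l+N)+(l+i)+1 from by omega,
        show (l+i)+l = 2*l+i from by omega,
        show (l+i)-l = i from by omega,
        show (l+N)-(l+i) = N-i from by omega]
    rw [div_mul_div_comm, div_mul_div_comm]
    rw [div_eq_div_iff (by positivity) (by positivity)]
    ring
  rw [Finset.sum_congr rfl hper, ← Finset.sum_mul, hkeyR,
      Nat.cast_choose ℝ (show l ≤ l+N by omega),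
      show l+N-l = N from by omega]
  field_simp

lemma sumT' (l s : ℕ) (h : l ≤ s) :
    ∑ m ∈ Icc l s, ((m+l).factorial : ℝ) /
        ((m-l).factorial * (s-m).factorial * (s+m+1).factorial)
      = 4^(s-l) * (2*l).factorial * s.factorial /
        ((2*s+1).factorial * l.factorial * (s-l).factorial) := by
  obtain ⟨N, rfl⟩ : ∃ N, s = l+N := ⟨s-l, by omega⟩
  rw [show l+N-l = N from by omega]
  exact sumT l N

lemma poch_nat (m : ℕ) : ∀ k : ℕ,
    (ascPochhammer ℝ k).eval ((m:ℝ)+1) * m.factorial = (m+k).factorial := by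
  intro k
  induction k with
  | zero => simp
  | succ k ih =>
    rw [ascPochhammer_succ_eval]
    have e : ((m+(k+1)).factorial : ℝ) = ((m+k).factorial : ℝ) * ((m:ℝ)+k+1) := by
      rw [show m+(k+1) = (m+k)+1 from by omega, Nat.factorial_succ]
      push_cast
      ring
    rw [e, ← ih]
    ring

lemma poch_half (l : ℕ) : ∀ k : ℕ, (ascPochhammer ℝ k).eval ((l:ℝ)+1/2)
    = (2*(l+k)).factorial * l.factorial /
      ((2*l).factorial * (l+k).factorial * 4^k) := by
  intro k
  induction k with
  | zero =>
    simp only [ascPochhammer_zero, eval_one, Nat.add_zero, pow_zero, mul_one]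
    rw [div_self (by positivity)]
  | succ k ih =>
    rw [ascPochhammer_succ_eval, ih]
    have e1 : 2*(l+(k+1)) = (2*(l+k)+1)+1 := by omega
    rw [e1, Nat.factorial_succ, show (2*(l+k)+1) = (2*(l+k))+1 from rfl,
        Nat.factorial_succ, show l+(k+1) = (l+k)+1 from rfl, Nat.factorial_succ]
    push_cast
    rw [div_mul_eq_mul_div, div_eq_div_iff (by positivity) (by positivity)]
    ring

lemma dfact_odd (s : ℕ) : ((2*s+1).factorial : ℝ)
    = ((2*s+1).doubleFactorial : ℝ) * 2^s * s.factorial := by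
  have h1 := Nat.factorial_eq_mul_doubleFactorial (2*s)
  rw [Nat.doubleFactorial_two_mul] at h1
  have h3 : (2*s+1).factorial = (2*s+1).doubleFactorial * 2^s * s.factorial := by
    rw [h1]; ring
  exact_mod_cast h3

lemma chebV_eq (m : ℕ) : chebV m
    = ∑ l ∈ range (m+1), C ((4:ℝ)^l * (m+l).factorial /
        ((2*l).factorial * (m-l).factorial)) * (C (1/2:ℝ) * (X - 1))^l := by
  rw [chebV, jacobiP, Finset.mul_sum]
  apply Finset.sum_congr rfl
  intro l hl
  have hlm : l ≤ m := by have := mem_range.mp hl; omega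
  rw [← mul_assoc, ← C_mul]
  congr 2
  have e1 : (m:ℝ) + -(1/2) + 1/2 + 1 = (m:ℝ)+1 := by ring
  have e2 : -(1/2) + (l:ℝ) + 1 = (l:ℝ)+1/2 := by ring
  rw [e1, e2, poch_half l (m-l)]
  have hp1 : (ascPochhammer ℝ l).eval ((m:ℝ)+1)
      = (m+l).factorial / m.factorial := by
    rw [eq_div_iff (fact_ne' m)]
    exact poch_nat m l
  rw [hp1]
  obtain ⟨d, rfl⟩ : ∃ d, m = l+d := ⟨m-l, by omega⟩
  rw [show l+d-l = d from by omega, show l+(d) = l+d from rfl]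
  rw [Nat.cast_choose ℝ (show l+d ≤ 2*(l+d) by omega),
      show 2*(l+d)-(l+d) = l+d from by omega]
  rw [show (2:ℝ)^(2*(l+d)) = 4^l * 4^d from by rw [pow_mul, pow_add]; norm_num]
  field_simp


lemma dfact_ne (k : ℕ) : ((k.doubleFactorial : ℝ)) ≠ 0 := by
  have := Nat.doubleFactorial_pos k
  positivity

lemma inner_sum_chebV (n l : ℕ) (hln : l ≤ n) :
    ∑ m ∈ Ico l (n+1),
      ((∑ j ∈ range (n-m+1), (-1:ℝ)^j * ((2*(n-j)+1).doubleFactorial : ℝ) *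
          (n.factorial : ℝ) /
        ((n-j-m).factorial * (n-j+m+1).factorial * j.factorial)) *
       ((4:ℝ)^l * (m+l).factorial / ((2*l).factorial * (m-l).factorial)))
    = (n.choose l : ℝ) * 2^l := by
  -- Step 1 : reindex the inner sum over s = n - j
  have step1 : ∀ m, l ≤ m → m ≤ n →
      (∑ j ∈ range (n-m+1), (-1:ℝ)^j * ((2*(n-j)+1).doubleFactorial : ℝ) *
          (n.factorial : ℝ) /
        ((n-j-m).factorial * (n-j+m+1).factorial * j.factorial))
      = ∑ s ∈ Ico m (n+1), (-1:ℝ)^(n-s) * ((2*s+1).doubleFactorial : ℝ) *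
          (n.factorial : ℝ) /
        ((s-m).factorial * (s+m+1).factorial * (n-s).factorial) := by
    intro m hlm hmn
    rw [Finset.sum_Ico_eq_sum_range, show n+1-m = n-m+1 from by omega,
        ← Finset.sum_range_reflect]
    apply Finset.sum_congr rfl
    intro j hj
    have hj' := mem_range.mp hj
    rw [show n-m+1-1-j = n-(m+j) from by omega,
        show n-(n-(m+j)) = m+j from by omega]
  rw [Finset.sum_congr rfl (fun m hm => by
    have h := mem_Ico.mp hm
    rw [step1 m h.1 (by omega), Finset.sum_mul])]
  -- Step 2 : swap the two sums
  rw [Finset.sum_Ico_Ico_comm l (n+1)]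
  -- Step 3 : inner sum over m via sumT'
  have step3 : ∀ s, l ≤ s → s ≤ n →
      (∑ m ∈ Ico l (s+1),
        ((-1:ℝ)^(n-s) * ((2*s+1).doubleFactorial : ℝ) * (n.factorial : ℝ) /
          ((s-m).factorial * (s+m+1).factorial * (n-s).factorial)) *
        ((4:ℝ)^l * (m+l).factorial / ((2*l).factorial * (m-l).factorial)))
      = (-1:ℝ)^(n-s) * 2^s * (n.factorial : ℝ) /
          ((n-s).factorial * l.factorial * (s-l).factorial) := by
    intro s hls hsn
    rw [Finset.Ico_add_one_right_eq_Icc]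
    rw [Finset.sum_congr rfl (fun m hm => by
      show _ = ((-1:ℝ)^(n-s) * ((2*s+1).doubleFactorial : ℝ) * (n.factorial : ℝ) *
          (4:ℝ)^l / ((n-s).factorial * (2*l).factorial)) *
        (((m+l).factorial : ℝ) / ((m-l).factorial * (s-m).factorial * (s+m+1).factorial))
      ring)]
    rw [← Finset.mul_sum, sumT' l s hls, dfact_odd s]
    obtain ⟨u, rfl⟩ : ∃ u, s = l+u := ⟨s-l, by omega⟩
    rw [show l+u-l = u from by omega]
    rw [show (4:ℝ)^l = 2^l*2^l from by rw [← mul_pow]; norm_num,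
        show (4:ℝ)^u = 2^u*2^u from by rw [← mul_pow]; norm_num,
        pow_add]
    have hd := dfact_ne (2*(l+u)+1)
    field_simp
  rw [Finset.sum_congr rfl (fun s hs => by
    have h := mem_Ico.mp hs
    exact step3 s h.1 (by omega))]
  -- Step 4 : final binomial sum
  rw [Finset.sum_Ico_eq_sum_range, show n+1-l = n-l+1 from by omega]
  have hbin : (∑ t ∈ range (n-l+1), (2:ℝ)^t * (-1)^(n-l-t) * ((n-l).choose t : ℝ)) = 1 := by
    have h := add_pow (2:ℝ) (-1) (n-l)
    norm_num at h
    exact h.symm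
  calc ∑ t ∈ range (n-l+1),
        (-1:ℝ)^(n-(l+t)) * 2^(l+t) * (n.factorial : ℝ) /
          ((n-(l+t)).factorial * l.factorial * ((l+t)-l).factorial)
      = ∑ t ∈ range (n-l+1), ((n.choose l : ℝ) * 2^l) *
          ((2:ℝ)^t * (-1)^(n-l-t) * ((n-l).choose t : ℝ)) := by
        apply Finset.sum_congr rfl
        intro t ht
        have ht' := mem_range.mp ht
        rw [show n-(l+t) = n-l-t from by omega, show (l+t)-l = t from by omega,
            pow_add, Nat.cast_choose ℝ (show t ≤ n-l by omega),
            Nat.cast_choose ℝ (show l ≤ n by omega),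
            show n-l-t = n-l-t from rfl]
        rw [div_eq_iff (by positivity)]
        field_simp
    _ = (n.choose l : ℝ) * 2^l := by rw [← Finset.mul_sum, hbin, mul_one]

theorem monomial_in_chebV (n : ℕ) :
    (X : ℝ[X]) ^ n =
      ∑ m ∈ range (n + 1),
        C (∑ l ∈ range (n - m + 1),
            (-1 : ℝ) ^ l * (Nat.doubleFactorial (2 * (n - l) + 1) : ℝ) * n.factorial /
            ((n - l - m).factorial * (n - l + m + 1).factorial * l.factorial)) * chebV m := by
  symm
  calc ∑ m ∈ range (n + 1),
        C (∑ l ∈ range (n - m + 1),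
            (-1 : ℝ) ^ l * (Nat.doubleFactorial (2 * (n - l) + 1) : ℝ) * n.factorial /
            ((n - l - m).factorial * (n - l + m + 1).factorial * l.factorial)) * chebV m
      = ∑ m ∈ Ico 0 (n+1), ∑ l ∈ Ico 0 (m+1),
          C ((∑ j ∈ range (n - m + 1),
            (-1 : ℝ) ^ j * ((2 * (n - j) + 1).doubleFactorial : ℝ) * n.factorial /
            ((n - j - m).factorial * (n - j + m + 1).factorial * j.factorial)) *
            ((4:ℝ)^l * (m+l).factorial / ((2*l).factorial * (m-l).factorial))) *
            (C (1/2:ℝ) * (X - 1))^l := by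
        rw [← range_eq_Ico]
        apply Finset.sum_congr rfl
        intro m hm
        rw [chebV_eq m, Finset.mul_sum]
        rw [← range_eq_Ico]
        apply Finset.sum_congr rfl
        intro l hl
        rw [← mul_assoc, ← C_mul]
    _ = ∑ l ∈ Ico 0 (n+1), ∑ m ∈ Ico l (n+1),
          C ((∑ j ∈ range (n - m + 1),
            (-1 : ℝ) ^ j * ((2 * (n - j) + 1).doubleFactorial : ℝ) * n.factorial /
            ((n - j - m).factorial * (n - j + m + 1).factorial * j.factorial)) *
            ((4:ℝ)^l * (m+l).factorial / ((2*l).factorial * (m-l).factorial))) *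
            (C (1/2:ℝ) * (X - 1))^l :=
        (Finset.sum_Ico_Ico_comm 0 (n+1) _).symm
    _ = ∑ l ∈ Ico 0 (n+1), C ((n.choose l : ℝ) * 2^l) * (C (1/2:ℝ) * (X - 1))^l := by
        apply Finset.sum_congr rfl
        intro l hl
        have hln : l ≤ n := by have := mem_Ico.mp hl; omega
        rw [← Finset.sum_mul, ← map_sum, inner_sum_chebV n l hln]
    _ = (X : ℝ[X])^n := by
        have hX : (X : ℝ[X]) = C 2 * (C (1/2:ℝ) * (X - 1)) + 1 := by
          rw [← mul_assoc, ← C_mul]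
          norm_num
        conv_rhs => rw [hX]
        rw [add_pow, range_eq_Ico]
        apply Finset.sum_congr rfl
        intro l hl
        rw [one_pow, mul_one, C_mul, Polynomial.C_eq_natCast, C_pow, mul_assoc, ← mul_pow]
        ring
end

section
/- For every natural number $n \geq 1$, the identity of polynomials $T_n(2x-1) = \sum_{k=0}^{n} \Big( \frac{n}{2} \sum_{v=0}^{\lfloor k/2 \rfloor} \binom{n-2v}{k-2v} (-1)^{k-v}\, 2^{2(n-v)-k}\, \frac{(n-v-1)!}{v!\,(n-2v)!} \Big) x^{n-k}$ holds in $\mathbb{R}[x]$. -/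
open Polynomial Finset

noncomputable def bb (n v : ℕ) : ℝ :=
  (n : ℝ) / 2 * (-1) ^ v * 2 ^ (n - 2 * v) * (n - v - 1).factorial /
    (v.factorial * (n - 2 * v).factorial)

lemma bb_key (n w : ℕ) (h : 2 * (w + 1) ≤ n + 1) :
    bb (n + 2) (w + 1) = 2 * bb (n + 1) (w + 1) - bb n w := by
  obtain ⟨d, rfl⟩ : ∃ d, n = 2 * w + 1 + d := ⟨n - (2*w+1), by omega⟩
  unfold bb
  rw [show 2*w+1+d + 2 - 2*(w+1) = d + 1 from by omega,
      show 2*w+1+d + 2 - (w+1) - 1 = w + d + 1 from by omega,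
      show 2*w+1+d + 1 - 2*(w+1) = d from by omega,
      show 2*w+1+d + 1 - (w+1) - 1 = w + d from by omega,
      show 2*w+1+d - 2*w = d + 1 from by omega,
      show 2*w+1+d - w - 1 = w + d from by omega,
      Nat.factorial_succ (w+d), Nat.factorial_succ w, Nat.factorial_succ d]
  have h1 : ((w+d).factorial : ℝ) ≠ 0 := Nat.cast_ne_zero.2 (Nat.factorial_ne_zero _)
  have h2 : (w.factorial : ℝ) ≠ 0 := Nat.cast_ne_zero.2 (Nat.factorial_ne_zero _)
  have h3 : (d.factorial : ℝ) ≠ 0 := Nat.cast_ne_zero.2 (Nat.factorial_ne_zero _)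
  push_cast
  field_simp
  ring

lemma bb_zero (k : ℕ) : bb (k + 1) 0 = 2 ^ k := by
  unfold bb
  rw [show k + 1 - 2 * 0 = k + 1 from by omega, show k + 1 - 1 = k from by omega,
      Nat.factorial_succ k]
  have h1 : (k.factorial : ℝ) ≠ 0 := Nat.cast_ne_zero.2 (Nat.factorial_ne_zero _)
  push_cast
  field_simp
  ring

lemma bb_top (m : ℕ) (hm : 1 ≤ m) : bb (2 * m + 2) (m + 1) = - bb (2 * m) m := by
  obtain ⟨j, rfl⟩ : ∃ j, m = j + 1 := ⟨m - 1, by omega⟩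
  unfold bb
  rw [show 2*(j+1) + 2 - 2*(j+1+1) = 0 from by omega,
      show 2*(j+1) + 2 - (j+1+1) - 1 = j + 1 from by omega,
      show 2*(j+1) - 2*(j+1) = 0 from by omega,
      show 2*(j+1) - (j+1) - 1 = j from by omega,
      Nat.factorial_succ (j+1), Nat.factorial_succ j]
  have h1 : (j.factorial : ℝ) ≠ 0 := Nat.cast_ne_zero.2 (Nat.factorial_ne_zero _)
  push_cast
  field_simp
  ring

lemma C2 : (C (2:ℝ)) = 2 := map_ofNat C 2

lemma step_sum (n : ℕ) (hn : 1 ≤ n) :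
    2 * X * (∑ v ∈ range ((n+1)/2 + 1), C (bb (n+1) v) * X ^ (n+1 - 2*v))
      - ∑ v ∈ range (n/2 + 1), C (bb n v) * X ^ (n - 2*v)
    = ∑ v ∈ range ((n+2)/2 + 1), C (bb (n+2) v) * X ^ (n+2 - 2*v) := by
  rcases Nat.even_or_odd n with ⟨m, rfl⟩ | ⟨m, rfl⟩
  · -- n = 2m, m ≥ 1
    have hm : 1 ≤ m := by omega
    rw [show m + m = 2 * m from by omega] at *
    rw [show (2*m+1)/2 + 1 = m + 1 from by omega,
        show (2*m)/2 + 1 = m + 1 from by omega,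
        show (2*m+2)/2 + 1 = m + 2 from by omega]
    rw [Finset.mul_sum]
    have l1 : ∀ v ∈ range (m+1), 2 * X * (C (bb (2*m+1) v) * X ^ (2*m+1 - 2*v)) =
        C (2 * bb (2*m+1) v) * X ^ (2*m+2 - 2*v) := by
      intro v hv
      simp only [Finset.mem_range] at hv
      rw [show 2*m+2 - 2*v = (2*m+1 - 2*v) + 1 from by omega, map_mul, C2]
      ring
    rw [Finset.sum_congr rfl l1,
        Finset.sum_range_succ' (fun v => C (2 * bb (2*m+1) v) * X ^ (2*m+2 - 2*v)) m,
        Finset.sum_range_succ (fun v => C (bb (2*m) v) * X ^ (2*m - 2*v)) m,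
        Finset.sum_range_succ' (fun v => C (bb (2*m+2) v) * X ^ (2*m+2 - 2*v)) (m+1),
        Finset.sum_range_succ (fun v => C (bb (2*m+2) (v+1)) * X ^ (2*m+2 - 2*(v+1))) m]
    have l2 : ∀ v ∈ range m, C (bb (2*m+2) (v+1)) * X ^ (2*m+2 - 2*(v+1)) =
        C (2 * bb (2*m+1) (v+1)) * X ^ (2*m+2 - 2*(v+1))
          - C (bb (2*m) v) * X ^ (2*m - 2*v) := by
      intro v hv
      simp only [Finset.mem_range] at hv
      rw [show 2*m+2 - 2*(v+1) = 2*m - 2*v from by omega,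
          bb_key (2*m) v (by omega), map_sub]
      ring
    rw [Finset.sum_congr rfl l2, Finset.sum_sub_distrib]
    have z1 : bb (2*m+2) 0 = 2 * bb (2*m+1) 0 := by
      rw [show 2*m+2 = (2*m+1)+1 from rfl, bb_zero,
          show 2*m+1 = (2*m)+1 from rfl, bb_zero]
      ring
    have t1 : bb (2*m+2) (m+1) = - bb (2*m) m := bb_top m hm
    rw [show 2*m+2 - 2*(m+1) = 2*m - 2*m from by omega, t1, z1]
    simp only [map_neg, map_mul, C2]
    ring
  · -- n = 2m+1
    rw [show (2*m+1+1)/2 + 1 = m + 2 from by omega,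
        show (2*m+1)/2 + 1 = m + 1 from by omega,
        show (2*m+1+2)/2 + 1 = m + 2 from by omega]
    rw [Finset.mul_sum]
    have l1 : ∀ v ∈ range (m+2), 2 * X * (C (bb (2*m+1+1) v) * X ^ (2*m+1+1 - 2*v)) =
        C (2 * bb (2*m+2) v) * X ^ (2*m+3 - 2*v) := by
      intro v hv
      simp only [Finset.mem_range] at hv
      rw [show 2*m+1+1 = 2*m+2 from rfl,
          show 2*m+3 - 2*v = (2*m+2 - 2*v) + 1 from by omega, map_mul, C2]
      ring
    rw [Finset.sum_congr rfl l1,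
        Finset.sum_range_succ' (fun v => C (2 * bb (2*m+2) v) * X ^ (2*m+3 - 2*v)) (m+1),
        show 2*m+1+2 = 2*m+3 from rfl,
        Finset.sum_range_succ' (fun v => C (bb (2*m+3) v) * X ^ (2*m+3 - 2*v)) (m+1)]
    have l2 : ∀ v ∈ range (m+1), C (bb (2*m+3) (v+1)) * X ^ (2*m+3 - 2*(v+1)) =
        C (2 * bb (2*m+2) (v+1)) * X ^ (2*m+3 - 2*(v+1))
          - C (bb (2*m+1) v) * X ^ (2*m+1 - 2*v) := by
      intro v hv
      simp only [Finset.mem_range] at hv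
      rw [show 2*m+3 - 2*(v+1) = 2*m+1 - 2*v from by omega,
          show 2*m+3 = (2*m+1)+2 from rfl, bb_key (2*m+1) v (by omega), map_sub]
      ring
    rw [Finset.sum_congr rfl l2, Finset.sum_sub_distrib]
    have z1 : bb (2*m+3) 0 = 2 * bb (2*m+2) 0 := by
      rw [show 2*m+3 = (2*m+2)+1 from rfl, bb_zero,
          show 2*m+2 = (2*m+1)+1 from rfl, bb_zero]
      ring
    rw [z1]
    simp only [map_mul, C2]
    ring

lemma T_monomial : ∀ n : ℕ, 1 ≤ n →
    Polynomial.Chebyshev.T ℝ (n : ℤ) =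
      ∑ v ∈ range (n / 2 + 1), C (bb n v) * X ^ (n - 2 * v) := by
  have base1 : Polynomial.Chebyshev.T ℝ ((1:ℕ) : ℤ) =
      ∑ v ∈ range (1 / 2 + 1), C (bb 1 v) * X ^ (1 - 2 * v) := by
    simp [Polynomial.Chebyshev.T_one, show bb 1 0 = 1 by
      have := bb_zero 0; simpa using this]
  have base2 : Polynomial.Chebyshev.T ℝ ((2:ℕ) : ℤ) =
      ∑ v ∈ range (2 / 2 + 1), C (bb 2 v) * X ^ (2 - 2 * v) := by
    have hb0 : bb 2 0 = 2 := by have := bb_zero 1; simpa using this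
    have hb1 : bb 2 1 = -1 := by
      unfold bb; norm_num [Nat.factorial]
    rw [show (2:ℕ)/2 + 1 = 2 from rfl, Finset.sum_range_succ, Finset.sum_range_succ,
        Finset.sum_range_zero, hb0, hb1]
    rw [show ((2:ℕ):ℤ) = 2 from rfl, Polynomial.Chebyshev.T_two]
    simp only [map_ofNat, Polynomial.C_neg, Polynomial.C_1, pow_zero, pow_one]
    ring
  intro n
  induction n using Nat.strong_induction_on with
  | _ n ih =>
    match n with
    | 0 => exact fun h => absurd h (by omega)
    | 1 => exact fun _ => base1
    | 2 => exact fun _ => base2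
    | (k + 3) =>
      intro _
      have h1 := ih (k + 1) (by omega) (by omega)
      have h2 := ih (k + 2) (by omega) (by omega)
      have hrec := Polynomial.Chebyshev.T_add_two ℝ ((k:ℤ) + 1)
      have hcast : ((k + 3 : ℕ) : ℤ) = ((k:ℤ) + 1) + 2 := by push_cast; ring
      have hcast2 : ((k + 2 : ℕ) : ℤ) = ((k:ℤ) + 1) + 1 := by push_cast; ring
      have hcast1 : ((k + 1 : ℕ) : ℤ) = ((k:ℤ) + 1) := by push_cast; ring
      rw [hcast, hrec, ← hcast2, ← hcast1, h1, h2]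
      have := step_sum (k+1) (by omega)
      rw [show k+1+1 = k+2 from rfl, show k+1+2 = k+3 from rfl] at this
      exact this

lemma term_eq (v i j : ℕ) :
    bb (2*v+i+j) v * (2 ^ i * (-1 : ℝ) ^ j * ((i+j).choose i)) =
    ((2*v+i+j : ℕ) : ℝ) / 2 *
      (((i+j).choose (2*v+j - 2*v) : ℝ) * (-1 : ℝ) ^ (2*v+j - v) *
       2 ^ (2 * (2*v+i+j - v) - (2*v+j)) * ((2*v+i+j - v - 1).factorial) /
       (v.factorial * ((i+j).factorial))) := by
  rw [show (2*v+j) - 2*v = j from by omega,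
      show (2*v+j) - v = v + j from by omega,
      show 2 * (2*v+i+j - v) - (2*v+j) = 2*i + j from by omega,
      show 2*v+i+j - v - 1 = v+i+j - 1 from by omega,
      show (i+j).choose j = (i+j).choose i from by
        rw [← Nat.choose_symm (by omega : i ≤ i + j), show i+j-i = j from by omega]]
  unfold bb
  rw [show 2*v+i+j - 2*v = i + j from by omega,
      show 2*v+i+j - v - 1 = v+i+j-1 from by omega]
  push_cast
  ring

lemma expand_pow (e : ℕ) : ((2*X - 1 : ℝ[X]))^e =
    ∑ i ∈ range (e+1), C ((2:ℝ)^i * (-1)^(e-i) * ((e.choose i):ℝ)) * X^i := by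
  rw [sub_eq_add_neg, add_pow]
  apply Finset.sum_congr rfl
  intro i hi
  simp only [map_mul, map_pow, map_neg, map_one, C2, Polynomial.C_eq_natCast]
  rw [mul_pow]
  ring

theorem shifted_chebT_in_monomials (n : ℕ) (hn : 1 ≤ n) :
    (Polynomial.Chebyshev.T ℝ (n : ℤ)).comp (2 * X - 1) =
      ∑ k ∈ range (n + 1),
        C ((n : ℝ) / 2 *
           ∑ v ∈ range (k / 2 + 1),
             ((n - 2 * v).choose (k - 2 * v) : ℝ) * (-1 : ℝ) ^ (k - v) *
             2 ^ (2 * (n - v) - k) * (n - v - 1).factorial /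
             (v.factorial * (n - 2 * v).factorial)) * X ^ (n - k) := by
  rw [T_monomial n hn, Polynomial.sum_comp]
  simp only [Polynomial.mul_comp, Polynomial.C_comp, Polynomial.pow_comp, Polynomial.X_comp]
  -- expand powers
  have lhs_eq : ∀ v ∈ range (n/2 + 1),
      C (bb n v) * (2 * X - 1 : ℝ[X]) ^ (n - 2*v) =
      ∑ i ∈ range (n - 2*v + 1),
        C (bb n v * ((2:ℝ)^i * (-1)^(n - 2*v - i) * (((n-2*v).choose i):ℝ))) * X^i := by
    intro v hv
    rw [expand_pow, Finset.mul_sum]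
    apply Finset.sum_congr rfl
    intro i hi
    rw [← mul_assoc, ← map_mul]
  rw [Finset.sum_congr rfl lhs_eq]
  -- expand rhs
  have rhs_eq : ∀ k ∈ range (n+1),
      (C ((n : ℝ) / 2 *
           ∑ v ∈ range (k / 2 + 1),
             ((n - 2 * v).choose (k - 2 * v) : ℝ) * (-1 : ℝ) ^ (k - v) *
             2 ^ (2 * (n - v) - k) * (n - v - 1).factorial /
             (v.factorial * (n - 2 * v).factorial)) * X ^ (n - k) : ℝ[X]) =
      ∑ v ∈ range (k / 2 + 1),
        C ((n : ℝ) / 2 *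
             (((n - 2 * v).choose (k - 2 * v) : ℝ) * (-1 : ℝ) ^ (k - v) *
             2 ^ (2 * (n - v) - k) * (n - v - 1).factorial /
             (v.factorial * (n - 2 * v).factorial))) * X ^ (n - k) := by
    intro k hk
    rw [Finset.mul_sum, map_sum, Finset.sum_mul]
  rw [Finset.sum_congr rfl rhs_eq]
  rw [Finset.sum_sigma', Finset.sum_sigma']
  apply Finset.sum_nbij' (fun x : Σ _ : ℕ, ℕ => (⟨n - x.2, x.1⟩ : Σ _ : ℕ, ℕ))
    (fun y : Σ _ : ℕ, ℕ => (⟨y.2, n - y.1⟩ : Σ _ : ℕ, ℕ))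
  · rintro ⟨v, i⟩ hx
    simp only [Finset.mem_sigma, Finset.mem_range] at hx ⊢
    omega
  · rintro ⟨k, v⟩ hy
    simp only [Finset.mem_sigma, Finset.mem_range] at hy ⊢
    omega
  · rintro ⟨v, i⟩ hx
    simp only [Finset.mem_sigma, Finset.mem_range] at hx
    simp only [Sigma.mk.inj_iff, heq_eq_eq]
    exact ⟨trivial, by omega⟩
  · rintro ⟨k, v⟩ hy
    simp only [Finset.mem_sigma, Finset.mem_range] at hy
    simp only [Sigma.mk.inj_iff, heq_eq_eq]
    exact ⟨by omega, trivial⟩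
  · rintro ⟨v, i⟩ hx
    simp only [Finset.mem_sigma, Finset.mem_range] at hx
    simp only
    obtain ⟨j, hj⟩ : ∃ j, n = 2*v + i + j := ⟨n - 2*v - i, by omega⟩
    subst hj
    rw [show 2*v+i+j - (2*v+i+j - i) = i from by omega,
        show 2*v+i+j - i = 2*v+j from by omega,
        show 2*v+i+j - 2*v - i = j from by omega,
        show 2*v+i+j - 2*v = i+j from by omega]
    exact congrArg (· * X ^ i) (congrArg C (term_eq v i j))
end

section
/- For every natural number $n$, the identity of polynomials $U_n(2x-1) = \sum_{k=0}^{n} \Big( \sum_{v=0}^{\lfloor k/2 \rfloor} \binom{n-2v}{k-2v} \binom{n-v}{v} (-1)^{k-v}\, 2^{2(n-v)-k} \Big) x^{n-k}$ holds in $\mathbb{R}[x]$. -/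
open Polynomial Finset

private noncomputable def chebTerm (m v : ℕ) : Polynomial ℝ :=
  C ((-1 : ℝ) ^ v * ((m - v).choose v : ℝ)) * (2 * X) ^ (m - 2 * v)

private lemma chebTerm_eq_zero {m v : ℕ} (h : m < 2 * v) : chebTerm m v = 0 := by
  have : (m - v).choose v = 0 := Nat.choose_eq_zero_of_lt (by omega)
  simp [chebTerm, this]

private lemma chebTerm_rec (n v : ℕ) :
    chebTerm (n + 2) (v + 1) = 2 * X * chebTerm (n + 1) (v + 1) - chebTerm n v := by
  have hc : (n + 1 - v).choose (v + 1) = (n - v).choose (v + 1) + (n - v).choose v := by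
    rcases le_or_gt v n with h | h
    · have h1 : n + 1 - v = (n - v) + 1 := by omega
      rw [h1, Nat.choose_succ_succ, add_comm]
    · have h0 : n - v = 0 := by omega
      have h1 : (n + 1 - v).choose (v + 1) = 0 := Nat.choose_eq_zero_of_lt (by omega)
      have h2 : (0 : ℕ).choose (v + 1) = 0 := Nat.choose_eq_zero_of_lt (by omega)
      have h3 : (0 : ℕ).choose v = 0 := Nat.choose_eq_zero_of_lt (by omega)
      rw [h0, h1, h2, h3]
  have he2 : n + 2 - (v + 1) = n + 1 - v := by omega
  have he1 : n + 1 - (v + 1) = n - v := by omega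
  rcases le_or_gt (2 * v + 1) n with h | h
  · obtain ⟨e, he⟩ : ∃ e, n - 2 * v = e + 1 := ⟨n - 2 * v - 1, by omega⟩
    have p2 : n + 2 - 2 * (v + 1) = e + 1 := by omega
    have p1 : n + 1 - 2 * (v + 1) = e := by omega
    simp only [chebTerm, he2, he1, hc, p2, p1, he]
    push_cast
    simp only [pow_succ, map_mul, map_add, map_neg, map_one]
    ring
  · have hc1 : (n - v).choose (v + 1) = 0 := Nat.choose_eq_zero_of_lt (by omega)
    have p2 : n + 2 - 2 * (v + 1) = n - 2 * v := by omega
    simp only [chebTerm, he2, he1, hc, hc1, p2]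
    push_cast
    simp only [pow_succ, map_mul, map_add, map_neg, map_one, map_zero, mul_zero, zero_mul]
    ring

lemma chebU_sum (n : ℕ) :
    Polynomial.Chebyshev.U ℝ (n : ℤ) = ∑ v ∈ range (n + 1), chebTerm n v := by
  induction n using Nat.twoStepInduction with
  | zero => simp [chebTerm]
  | one => simp [chebTerm, Polynomial.Chebyshev.U_one, Finset.sum_range_succ]
  | more n ih2 ih1 =>
    have key : Polynomial.Chebyshev.U ℝ ((n + 2 : ℕ) : ℤ)
        = 2 * X * Polynomial.Chebyshev.U ℝ ((n + 1 : ℕ) : ℤ)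
          - Polynomial.Chebyshev.U ℝ (n : ℤ) := by
      push_cast
      exact Polynomial.Chebyshev.U_add_two ℝ n
    rw [key, ih1, ih2]
    have ext1 : (∑ v ∈ range (n + 2), chebTerm (n + 1) v)
        = ∑ v ∈ range (n + 3), chebTerm (n + 1) v := by
      rw [Finset.sum_range_succ _ (n + 2), chebTerm_eq_zero (by omega), add_zero]
    have ext0 : (∑ v ∈ range (n + 1), chebTerm n v)
        = ∑ v ∈ range (n + 2), chebTerm n v := by
      rw [Finset.sum_range_succ _ (n + 1), chebTerm_eq_zero (by omega), add_zero]
    rw [ext1, ext0]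
    calc 2 * X * ∑ v ∈ range (n + 3), chebTerm (n + 1) v - ∑ v ∈ range (n + 2), chebTerm n v
        = (∑ v ∈ range (n + 2), 2 * X * chebTerm (n + 1) (v + 1) + 2 * X * chebTerm (n + 1) 0)
            - ∑ v ∈ range (n + 2), chebTerm n v := by
          rw [Finset.mul_sum, Finset.sum_range_succ' (fun v => 2 * X * chebTerm (n + 1) v) (n + 2)]
      _ = ∑ v ∈ range (n + 2), (2 * X * chebTerm (n + 1) (v + 1) - chebTerm n v)
            + 2 * X * chebTerm (n + 1) 0 := by
          rw [Finset.sum_sub_distrib]; ring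
      _ = ∑ v ∈ range (n + 2), chebTerm (n + 2) (v + 1) + chebTerm (n + 2) 0 := by
          congr 1
          · exact Finset.sum_congr rfl fun v _ => (chebTerm_rec n v).symm
          · simp [chebTerm, pow_succ]; ring
      _ = ∑ v ∈ range (n + 3), chebTerm (n + 2) v :=
          (Finset.sum_range_succ' (chebTerm (n + 2)) (n + 2)).symm

private lemma comp_term (n v : ℕ) :
    (chebTerm n v).comp (2 * X - 1)
      = C ((-1 : ℝ) ^ v * ((n - v).choose v : ℝ)) * (C (4:ℝ) * X + C (-2:ℝ)) ^ (n - 2 * v) := by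
  simp only [chebTerm, mul_comp, C_comp, pow_comp, X_comp, ofNat_comp]
  congr 2
  rw [map_ofNat, map_neg, map_ofNat]
  ring

private lemma term_eq_s10 (n v j : ℕ) (hv : 2 * v ≤ n) (hj : j ≤ n - 2 * v) :
    C ((-1 : ℝ) ^ v * ((n - v).choose v : ℝ)) *
      ((C (4:ℝ) * X) ^ (n - 2 * v - j) * C (-2:ℝ) ^ j * C (((n - 2 * v).choose j : ℝ)))
    = C (((n - 2 * v).choose ((2 * v + j) - 2 * v) : ℝ) * ((n - v).choose v : ℝ) *
          (-1 : ℝ) ^ ((2 * v + j) - v) * 2 ^ (2 * (n - v) - (2 * v + j))) *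
        X ^ (n - (2 * v + j)) := by
  have e1 : (2 * v + j) - 2 * v = j := by omega
  have e2 : (2 * v + j) - v = v + j := by omega
  have e3 : n - (2 * v + j) = n - 2 * v - j := by omega
  have e4 : 2 * (n - v) - (2 * v + j) = 2 * (n - 2 * v) - j := by omega
  rw [e1, e2, e3, e4]
  set e := n - 2 * v with he
  rw [mul_pow, ← C_pow, ← C_pow]
  rw [show C ((4:ℝ) ^ (e - j)) * X ^ (e - j) * C ((-2:ℝ) ^ j) * C (((e.choose j : ℝ)))
      = C ((4:ℝ) ^ (e - j) * (-2:ℝ) ^ j * (e.choose j : ℝ)) * X ^ (e - j) by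
    rw [C_mul, C_mul]; ring]
  rw [← mul_assoc, ← C_mul]
  have h2 : (2:ℝ) ^ (2 * (e - j)) * 2 ^ j = 2 ^ (2 * e - j) := by
    rw [← pow_add]; congr 1; omega
  have key : ((-2:ℝ)) ^ j = (-1) ^ j * 2 ^ j := by rw [neg_pow]
  have k4 : (4:ℝ) ^ (e - j) = 2 ^ (2 * (e - j)) := by
    rw [show (4:ℝ) = 2 ^ 2 from by norm_num, ← pow_mul]
  congr 2
  rw [key, k4, pow_add (-1:ℝ) v j, ← h2]
  ring

theorem shifted_chebU_in_monomials (n : ℕ) :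
    (Polynomial.Chebyshev.U ℝ (n : ℤ)).comp (2 * X - 1) =
      ∑ k ∈ range (n + 1),
        C (∑ v ∈ range (k / 2 + 1),
            ((n - 2 * v).choose (k - 2 * v) : ℝ) * ((n - v).choose v : ℝ) *
            (-1 : ℝ) ^ (k - v) * 2 ^ (2 * (n - v) - k)) * X ^ (n - k) := by
  rw [chebU_sum, Polynomial.sum_comp]
  calc (∑ v ∈ range (n + 1), (chebTerm n v).comp (2 * X - 1))
      = ∑ v ∈ range (n + 1),
          C ((-1 : ℝ) ^ v * ((n - v).choose v : ℝ)) * (C (4:ℝ) * X + C (-2:ℝ)) ^ (n - 2 * v) :=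
        Finset.sum_congr rfl fun v _ => comp_term n v
    _ = ∑ v ∈ range (n / 2 + 1),
          C ((-1 : ℝ) ^ v * ((n - v).choose v : ℝ)) * (C (4:ℝ) * X + C (-2:ℝ)) ^ (n - 2 * v) := by
        refine (Finset.sum_subset (fun x hx => ?_) (fun x hx hnx => ?_)).symm
        · simp only [mem_range] at *; omega
        · have hz : (n - x).choose x = 0 := by
            refine Nat.choose_eq_zero_of_lt ?_
            simp only [mem_range] at hx hnx; omega
          simp [hz]
    _ = ∑ v ∈ range (n / 2 + 1), ∑ j ∈ range (n - 2 * v + 1),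
          C (((n - 2 * v).choose ((2 * v + j) - 2 * v) : ℝ) * ((n - v).choose v : ℝ) *
              (-1 : ℝ) ^ ((2 * v + j) - v) * 2 ^ (2 * (n - v) - (2 * v + j))) *
            X ^ (n - (2 * v + j)) := by
        refine Finset.sum_congr rfl fun v hv => ?_
        simp only [mem_range] at hv
        have hv' : 2 * v ≤ n := by omega
        rw [add_pow, Finset.mul_sum, ← Finset.sum_range_reflect]
        refine Finset.sum_congr rfl fun j hj => ?_
        simp only [mem_range] at hj
        simp only [Nat.add_sub_cancel]
        have a1 : n - 2 * v - (n - 2 * v - j) = j := by omega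
        have a2 : (n - 2 * v).choose (n - 2 * v - j) = (n - 2 * v).choose j :=
          Nat.choose_symm (by omega)
        rw [a1, a2, ← Polynomial.C_eq_natCast]
        exact term_eq_s10 n v j hv' (by omega)
    _ = ∑ k ∈ range (n + 1), ∑ v ∈ range (k / 2 + 1),
          C (((n - 2 * v).choose (k - 2 * v) : ℝ) * ((n - v).choose v : ℝ) *
              (-1 : ℝ) ^ (k - v) * 2 ^ (2 * (n - v) - k)) * X ^ (n - k) := by
        rw [Finset.sum_sigma', Finset.sum_sigma']
        refine Finset.sum_nbij' (fun p => ⟨2 * p.1 + p.2, p.1⟩) (fun p => ⟨p.2, p.1 - 2 * p.2⟩)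
          ?_ ?_ ?_ ?_ ?_
        · rintro ⟨v, j⟩ hm
          simp only [mem_sigma, mem_range] at *
          omega
        · rintro ⟨k, v⟩ hm
          simp only [mem_sigma, mem_range] at *
          omega
        · rintro ⟨v, j⟩ hm
          simp only [mem_sigma, mem_range] at hm
          simp only [Sigma.mk.inj_iff, heq_eq_eq, true_and]
          omega
        · rintro ⟨k, v⟩ hm
          simp only [mem_sigma, mem_range] at hm
          simp only [Sigma.mk.inj_iff, heq_eq_eq, and_true]
          omega
        · rintro ⟨v, j⟩ hm
          rfl
    _ = ∑ k ∈ range (n + 1),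
          C (∑ v ∈ range (k / 2 + 1),
              ((n - 2 * v).choose (k - 2 * v) : ℝ) * ((n - v).choose v : ℝ) *
              (-1 : ℝ) ^ (k - v) * 2 ^ (2 * (n - v) - k)) * X ^ (n - k) := by
        refine Finset.sum_congr rfl fun k _ => ?_
        rw [map_sum, Finset.sum_mul]
end

section
/- For every natural number $n$, the identity of polynomials $V_n(2x-1) = \sum_{k=0}^{n} \Big( (-1)^{k}\, \frac{2^{2n-k}}{\binom{2n}{n}\,(n-k)!} \sum_{v=0}^{k} \sum_{l=0}^{v} 2^{l}\, \frac{(1+n)_{n-l}\,(\tfrac{1}{2}-n)_{l}}{(k-v)!\,(v-l)!\, l!} \Big) x^{n-k}$ holds in $\mathbb{R}[x]$. -/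
open Polynomial Finset

lemma sum_inv_fact (m : ℕ) :
    ∑ w ∈ range (m+1), (1:ℝ)/((m-w).factorial * w.factorial) = 2^m / m.factorial := by
  have h : ∀ w ∈ range (m+1), (1:ℝ)/((m-w).factorial * w.factorial)
      = (m.choose w : ℝ) / m.factorial := by
    intro w hw
    rw [mem_range] at hw
    rw [Nat.cast_choose ℝ (by omega : w ≤ m)]
    field_simp
  rw [Finset.sum_congr rfl h, ← Finset.sum_div]
  norm_cast
  rw [Nat.sum_range_choose]

lemma collapse (k : ℕ) (g : ℕ → ℝ) :
    ∑ v ∈ range (k+1), ∑ l ∈ range (v+1), g l / ((k-v).factorial * (v-l).factorial)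
      = ∑ l ∈ range (k+1), g l * 2^(k-l) / (k-l).factorial := by
  have := Finset.sum_Ico_Ico_comm 0 (k+1) (fun l v => g l / ((k-v).factorial * (v-l).factorial))
  simp only [Nat.Ico_zero_eq_range] at this
  rw [← this]
  refine Finset.sum_congr rfl fun l hl => ?_
  rw [mem_range] at hl
  rw [Finset.sum_Ico_eq_sum_range]
  have hkl : k + 1 - l = (k - l) + 1 := by omega
  rw [hkl]
  have : ∀ w ∈ range ((k-l)+1),
      g l / (((k - (l + w)).factorial : ℝ) * ((l + w - l).factorial))
        = g l * ((1:ℝ)/(((k-l) - w).factorial * w.factorial)) := by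
    intro w hw
    rw [mem_range] at hw
    have h1 : k - (l + w) = (k - l) - w := by omega
    have h2 : l + w - l = w := by omega
    rw [h1, h2]
    ring
  rw [Finset.sum_congr rfl this, ← Finset.mul_sum, sum_inv_fact]
  ring

theorem shifted_chebV_in_monomials (n : ℕ) :
    (chebV n).comp (2 * X - 1) =
      ∑ k ∈ range (n + 1),
        C ((-1 : ℝ) ^ k * (2 : ℝ) ^ (2 * n - k) / (((2 * n).choose n : ℝ) * (n - k).factorial) *
           ∑ v ∈ range (k + 1), ∑ l ∈ range (v + 1),
             2 ^ l * ((ascPochhammer ℝ (n - l)).eval (1 + (n : ℝ)) *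
                      (ascPochhammer ℝ l).eval (1 / 2 - (n : ℝ))) /
             ((k - v).factorial * (v - l).factorial * l.factorial)) * X ^ (n - k) := by
  rw [chebV, jacobiP]
  simp only [mul_comp, Polynomial.sum_comp, C_comp, pow_comp, sub_comp, X_comp, one_comp]
  have hbase : C (1/2 : ℝ) * (2 * X - 1 - 1) = X + C (-1) := by
    have h2 : (2 : ℝ[X]) = C 2 := (map_ofNat C 2).symm
    rw [mul_sub, mul_sub, mul_one, h2, ← mul_assoc, ← C_mul, sub_sub, ← C_add,
      sub_eq_add_neg, ← C_neg]
    norm_num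
  rw [hbase]
  ext m
  simp only [coeff_C_mul, finset_sum_coeff, coeff_X_add_C_pow, coeff_X_pow]
  by_cases hm : m ≤ n
  · -- main case
    obtain ⟨k, hk, rfl⟩ : ∃ k, k ≤ n ∧ m = n - k := ⟨n - m, by omega, by omega⟩
    -- RHS: single term k
    conv_rhs => rw [Finset.sum_eq_single_of_mem k (by simp; omega)
      (fun x hx hxk => by
        rw [if_neg (by rw [mem_range] at hx; omega), mul_zero]),
      if_pos rfl, mul_one]
    -- collapse the double sum
    rw [show (∑ v ∈ range (k + 1), ∑ l ∈ range (v + 1),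
          2 ^ l * ((ascPochhammer ℝ (n - l)).eval (1 + (n : ℝ)) *
                   (ascPochhammer ℝ l).eval (1 / 2 - (n : ℝ))) /
          (((k - v).factorial : ℝ) * (v - l).factorial * l.factorial))
        = ∑ v ∈ range (k + 1), ∑ l ∈ range (v + 1),
            (2 ^ l * ((ascPochhammer ℝ (n - l)).eval (1 + (n : ℝ)) *
                   (ascPochhammer ℝ l).eval (1 / 2 - (n : ℝ))) / l.factorial) /
            (((k - v).factorial : ℝ) * (v - l).factorial) from
      Finset.sum_congr rfl fun v _ => Finset.sum_congr rfl fun l _ => by ring,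
      collapse k]
    -- LHS: reflect and truncate
    rw [← Finset.sum_range_reflect]
    simp only [Nat.add_sub_cancel]
    rw [← Finset.sum_subset (Finset.range_subset_range.mpr (by omega : k + 1 ≤ n + 1))
      (fun x hx hx2 => by
        rw [mem_range] at hx
        rw [mem_range, not_lt] at hx2
        rw [Nat.choose_eq_zero_of_lt (by omega : n - x < n - k), Nat.cast_zero, mul_zero,
          mul_zero])]
    rw [Finset.mul_sum, Finset.mul_sum]
    refine Finset.sum_congr rfl fun i hi => ?_
    rw [mem_range] at hi
    have hik : i ≤ k := by omega
    obtain ⟨a, rfl⟩ : ∃ a, k = i + a := ⟨k - i, by omega⟩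
    obtain ⟨b, rfl⟩ : ∃ b, n = i + a + b := ⟨n - (i + a), by omega⟩
    rw [show i + a + b - i = a + b from by omega,
        show i + a + b - (a + b) = i from by omega,
        show i + a + b - (i + a) = b from by omega,
        show a + b - b = a from by omega,
        show 2 * (i + a + b) - (i + a) = i + a + 2 * b from by omega,
        show i + a - i = a from by omega]
    have e1 : ((i:ℝ) + a + b) + -(1/2) + 1/2 + 1 = 1 + ((i:ℝ) + a + b) := by ring
    have e2 : -(1/2 : ℝ) + ((a + b : ℕ) : ℝ) + 1 = ((i:ℝ) + a + b) - i + 1/2 := by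
      push_cast; ring
    rw [show ((i + a + b : ℕ) : ℝ) = (i:ℝ) + a + b from by push_cast; ring] 
    rw [e1, e2]
    have hp : (ascPochhammer ℝ i).eval (1/2 - ((i:ℝ) + a + b))
        = (-1)^i * (ascPochhammer ℝ i).eval (((i:ℝ) + a + b) - i + 1/2) := by
      rw [show (1/2 - ((i:ℝ) + a + b)) = -(((i:ℝ) + a + b) - 1/2) by ring,
        ascPochhammer_eval_neg_eq_descPochhammer, descPochhammer_eval_eq_ascPochhammer]
      congr 2
      ring
    rw [hp]
    have hchoose : (((a + b).choose b : ℕ) : ℝ)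
        = ((a + b).factorial : ℝ) / ((b.factorial : ℝ) * (a.factorial : ℝ)) := by
      rw [Nat.cast_choose ℝ (by omega : b ≤ a + b), show a + b - b = a from by omega]
    rw [hchoose]
    have hB : (((2*(i + a + b)).choose (i + a + b) : ℕ) : ℝ) ≠ 0 :=
      Nat.cast_ne_zero.mpr (Nat.choose_pos (by omega)).ne'
    have f1 : (((a+b).factorial : ℕ) : ℝ) ≠ 0 := Nat.cast_ne_zero.mpr (Nat.factorial_ne_zero _)
    have f2 : ((b.factorial : ℕ) : ℝ) ≠ 0 := Nat.cast_ne_zero.mpr (Nat.factorial_ne_zero _)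
    have f3 : ((a.factorial : ℕ) : ℝ) ≠ 0 := Nat.cast_ne_zero.mpr (Nat.factorial_ne_zero _)
    have f4 : ((i.factorial : ℕ) : ℝ) ≠ 0 := Nat.cast_ne_zero.mpr (Nat.factorial_ne_zero _)
    field_simp
    ring_nf
    simp only [pow_mul']
    norm_num
  · -- m > n : both sides zero
    rw [Finset.sum_eq_zero, Finset.sum_eq_zero, mul_zero]
    · intro x hx
      rw [mem_range] at hx
      rw [if_neg (by omega), mul_zero]
    · intro x hx
      rw [mem_range] at hx
      rw [Nat.choose_eq_zero_of_lt (by omega), Nat.cast_zero, mul_zero, mul_zero]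
end

section
/- For every natural number $n$, the identity of polynomials $W_n(2x-1) = \sum_{k=0}^{n} \Big( (-1)^{k}\, \frac{2^{2n-k}}{\binom{2n}{n}\,(n-k)!} \sum_{v=0}^{k} \sum_{l=0}^{v} 2^{l}\, \frac{(1+n)_{n-l}\,(-\tfrac{1}{2}-n)_{l}}{(k-v)!\,(v-l)!\, l!} \Big) x^{n-k}$ holds in $\mathbb{R}[x]$. -/
open Polynomial Finset

lemma poch_reflect (j : ℕ) (x : ℝ) :
    (ascPochhammer ℝ j).eval (-x) = (-1) ^ j * (ascPochhammer ℝ j).eval (x - j + 1) := by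
  induction j generalizing x with
  | zero => simp
  | succ m ih =>
    conv_lhs => rw [ascPochhammer_succ_left]
    conv_rhs => rw [ascPochhammer_succ_right]
    have h : (-x + 1 : ℝ) = -(x - 1) := by ring
    simp only [eval_mul, eval_comp, Polynomial.eval_add, Polynomial.eval_X,
      Polynomial.eval_one, Polynomial.eval_natCast, X_mul]
    rw [h, ih (x - 1)]
    push_cast
    ring

lemma sum_inv_factorials (m : ℕ) :
    ∑ i ∈ range (m + 1), (1 : ℝ) / ((m - i).factorial * i.factorial) =
      2 ^ m / m.factorial := by
  have h2 : ((2:ℝ)) ^ m = ∑ i ∈ range (m+1), (m.choose i : ℝ) := by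
    exact_mod_cast (Nat.sum_range_choose m).symm
  rw [h2, Finset.sum_div]
  refine Finset.sum_congr rfl fun i hi => ?_
  have hi' : i ≤ m := Nat.lt_succ_iff.mp (mem_range.mp hi)
  have key : (m.choose i : ℝ) * i.factorial * (m - i).factorial = m.factorial := by
    exact_mod_cast congrArg (Nat.cast : ℕ → ℝ) (Nat.choose_mul_factorial_mul_factorial hi')
  have h1 : (i.factorial : ℝ) ≠ 0 := Nat.cast_ne_zero.mpr i.factorial_ne_zero
  have h2 : ((m-i).factorial : ℝ) ≠ 0 := Nat.cast_ne_zero.mpr (m-i).factorial_ne_zero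
  have h3 : (m.factorial : ℝ) ≠ 0 := Nat.cast_ne_zero.mpr m.factorial_ne_zero
  field_simp
  linarith [key]

lemma triangle (k : ℕ) (g : ℕ → ℕ → ℝ) :
    ∑ v ∈ range (k+1), ∑ l ∈ range (v+1), g v l
      = ∑ l ∈ range (k+1), ∑ v ∈ Ico l (k+1), g v l := by
  rw [Finset.sum_sigma', Finset.sum_sigma']
  refine Finset.sum_nbij' (fun p => ⟨p.2, p.1⟩) (fun p => ⟨p.2, p.1⟩) ?_ ?_ ?_ ?_ ?_ <;>
    (intros; simp_all [Nat.lt_succ_iff]) <;> omega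

lemma S_simp (k : ℕ) (f : ℕ → ℝ) :
    ∑ v ∈ range (k+1), ∑ l ∈ range (v+1),
        2 ^ l * f l / ((k-v).factorial * (v-l).factorial * l.factorial)
      = ∑ l ∈ range (k+1), 2 ^ k * f l / ((k-l).factorial * l.factorial) := by
  rw [triangle]
  refine sum_congr rfl fun l hl => ?_
  have hl' : l ≤ k := Nat.lt_succ_iff.mp (mem_range.mp hl)
  rw [Finset.sum_Ico_eq_sum_range, show k + 1 - l = (k - l) + 1 from by omega]
  have hcong : ∀ i ∈ range (k - l + 1),
      2 ^ l * f l / ((k-(l+i)).factorial * ((l+i)-l).factorial * l.factorial)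
        = (2 ^ l * f l / l.factorial) * ((1:ℝ) / (((k-l)-i).factorial * i.factorial)) := by
    intro i hi
    rw [show l + i - l = i from by omega, show k - (l + i) = (k - l) - i from by omega]
    ring
  rw [sum_congr rfl hcong, ← mul_sum, sum_inv_factorials (k - l)]
  have h1 : (l.factorial : ℝ) ≠ 0 := Nat.cast_ne_zero.mpr l.factorial_ne_zero
  have h2 : (((k-l)).factorial : ℝ) ≠ 0 := Nat.cast_ne_zero.mpr (k-l).factorial_ne_zero
  have hp : (2:ℝ) ^ l * 2 ^ (k - l) = 2 ^ k := by
    rw [← pow_add, show l + (k - l) = k from by omega]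
  field_simp
  linear_combination f l * hp

theorem shifted_chebW_in_monomials (n : ℕ) :
    (chebW n).comp (2 * X - 1) =
      ∑ k ∈ range (n + 1),
        C ((-1 : ℝ) ^ k * (2 : ℝ) ^ (2 * n - k) / (((2 * n).choose n : ℝ) * (n - k).factorial) *
           ∑ v ∈ range (k + 1), ∑ l ∈ range (v + 1),
             2 ^ l * ((ascPochhammer ℝ (n - l)).eval (1 + (n : ℝ)) *
                      (ascPochhammer ℝ l).eval (-(1 / 2) - (n : ℝ))) /
             ((k - v).factorial * (v - l).factorial * l.factorial)) * X ^ (n - k) := by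
  have hB : (((2 * n).choose n : ℕ) : ℝ) ≠ 0 :=
    Nat.cast_ne_zero.mpr (Nat.choose_pos (by omega)).ne'
  -- Step A: normalize the LHS
  have hL : (chebW n).comp (2 * X - 1) =
      C ((2 : ℝ) ^ (2 * n) / ((2 * n).choose n : ℝ)) *
        ∑ l ∈ range (n + 1),
          C (((ascPochhammer ℝ l).eval ((n : ℝ) + 1) *
              (ascPochhammer ℝ (n - l)).eval (1 / 2 + (l:ℝ) + 1)) /
             (l.factorial * (n - l).factorial)) * (X - 1) ^ l := by
    have key : (C (1/2 : ℝ) * (2 * X - 1 - 1)) = X - 1 := by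
      have h2 : (2 : ℝ[X]) = C 2 := by
        rw [show (2:ℝ) = 1 + 1 by norm_num, C_add, C_1]; ring
      rw [show (2 * X - 1 - 1 : ℝ[X]) = 2 * (X - 1) by ring, h2, ← mul_assoc, ← C_mul]
      norm_num
    simp only [chebW, jacobiP, mul_comp, Polynomial.sum_comp, C_comp, pow_comp, sub_comp, X_comp,
      one_comp]
    refine congrArg _ (sum_congr rfl fun l hl => ?_)
    rw [key]
    norm_num
  rw [hL]
  -- Step B: simplify the inner double sums on the RHS
  have hRcong : ∀ k ∈ range (n + 1),
      (C ((-1 : ℝ) ^ k * (2 : ℝ) ^ (2 * n - k) / (((2 * n).choose n : ℝ) * (n - k).factorial) *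
           ∑ v ∈ range (k + 1), ∑ l ∈ range (v + 1),
             2 ^ l * ((ascPochhammer ℝ (n - l)).eval (1 + (n : ℝ)) *
                      (ascPochhammer ℝ l).eval (-(1 / 2) - (n : ℝ))) /
             ((k - v).factorial * (v - l).factorial * l.factorial)) * X ^ (n - k) : ℝ[X])
      = C ((-1 : ℝ) ^ k * (2 : ℝ) ^ (2 * n - k) / (((2 * n).choose n : ℝ) * (n - k).factorial) *
           ∑ l ∈ range (k + 1),
             2 ^ k * ((ascPochhammer ℝ (n - l)).eval (1 + (n : ℝ)) *
                      (ascPochhammer ℝ l).eval (-(1 / 2) - (n : ℝ))) /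
             ((k - l).factorial * l.factorial)) * X ^ (n - k) := by
    intro k _
    rw [S_simp k (fun l => (ascPochhammer ℝ (n - l)).eval (1 + (n : ℝ)) *
                      (ascPochhammer ℝ l).eval (-(1 / 2) - (n : ℝ)))]
  rw [sum_congr rfl hRcong]
  -- Step C: compare coefficients
  ext d
  have hx : (X - 1 : ℝ[X]) = X + C (-1) := by rw [C_neg, C_1]; ring
  simp only [finset_sum_coeff, coeff_C_mul, hx, coeff_X_add_C_pow, coeff_X_pow,
    mul_ite, mul_one, mul_zero, Finset.mul_sum]
  by_cases hd : d ≤ n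
  · -- main case
    conv_rhs => rw [Finset.sum_eq_single_of_mem (n - d) (mem_range.mpr (by omega))
      (fun k hk hne => if_neg (by simp only [mem_range] at hk; omega))]
    rw [if_pos (show d = n - (n - d) from by omega)]
    -- reindex the left sum
    rw [← Finset.sum_range_reflect]
    simp only [Nat.add_sub_cancel]
    rw [← Finset.sum_subset (Finset.range_subset_range.mpr (by omega : n - d + 1 ≤ n + 1))
        (fun j hj hj' => by
          have hjd : n - j < d := by simp only [mem_range] at hj hj'; omega
          rw [Nat.choose_eq_zero_of_lt hjd]
          simp)]
    refine sum_congr rfl fun j hj => ?_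
    have hjle : j ≤ n - d := Nat.lt_succ_iff.mp (mem_range.mp hj)
    -- nat-sub cleanups
    rw [show n - (n - j) = j from by omega, show n - (n - d) = d from by omega,
      show 2 * n - (n - d) = n + d from by omega]
    have hfd : (d.factorial : ℝ) ≠ 0 := Nat.cast_ne_zero.mpr d.factorial_ne_zero
    have hfj : (j.factorial : ℝ) ≠ 0 := Nat.cast_ne_zero.mpr j.factorial_ne_zero
    have hfnj : ((n - j).factorial : ℝ) ≠ 0 := Nat.cast_ne_zero.mpr (n - j).factorial_ne_zero
    have hfndj : ((n - d - j).factorial : ℝ) ≠ 0 :=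
      Nat.cast_ne_zero.mpr (n - d - j).factorial_ne_zero
    have hcast : ((n - j : ℕ) : ℝ) = (n : ℝ) - j := by
      rw [Nat.cast_sub (by omega)]
    have hch : (((n - j).choose d : ℕ) : ℝ) =
        ((n - j).factorial : ℝ) / (d.factorial * (n - d - j).factorial) := by
      rw [eq_div_iff (by positivity), show n - d - j = (n - j) - d from by omega]
      push_cast [← Nat.choose_mul_factorial_mul_factorial (show d ≤ n - j from by omega)]
      ring
    have hrefl : (ascPochhammer ℝ j).eval (-(1 / 2) - (n : ℝ)) =
        (-1) ^ j * (ascPochhammer ℝ j).eval (1 / 2 + ((n : ℝ) - j) + 1) := by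
      rw [show (-(1/2) - (n:ℝ)) = -((n:ℝ) + 1/2) from by ring, poch_reflect,
        show ((n:ℝ) + 1/2 - j + 1) = 1 / 2 + ((n : ℝ) - j) + 1 from by ring]
    have hsq : ((-1 : ℝ)) ^ j * (-1) ^ j = 1 := by
      rw [← pow_add, ← two_mul, pow_mul]; norm_num
    have hsgn : ((-1 : ℝ)) ^ (n - j - d) = (-1) ^ (n - d) * (-1) ^ j := by
      rw [show n - d = (n - j - d) + j from by omega, pow_add, mul_assoc, hsq, mul_one]
    have hpow : ((2 : ℝ)) ^ (2 * n) = 2 ^ (n + d) * 2 ^ (n - d) := by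
      rw [← pow_add]; congr 1; omega
    rw [hcast, hch, hrefl, hsgn, hpow, show (1 + (n:ℝ)) = (n:ℝ) + 1 from by ring]
    field_simp
  · -- degree too large: both sides vanish
    push_neg at hd
    rw [Finset.sum_eq_zero (fun l hl => by
        have hld : l < d := by simp only [mem_range] at hl; omega
        rw [Nat.choose_eq_zero_of_lt hld]
        simp),
      Finset.sum_eq_zero (fun k hk => by
        exact if_neg (by simp only [mem_range] at hk; omega))]
end

section
/- For every natural number $n$, the identity of polynomials $x^n = \sum_{k=0}^{n} \alpha_3(n,k)\, T_{n-k}(2x-1)$ holds in $\mathbb{R}[x]$, where for $0 \leq k < n$, $\alpha_3(n,k) = 2^{1-2n} \sum_{0 \leq v \leq k,\; k-v \text{ even}} \binom{n-v}{(k-v)/2} \binom{n}{v}\, 2^{v}$, and for $k = n$, $\alpha_3(n,n) = 2^{-2n} \sum_{0 \leq v \leq n,\; n-v \text{ even}} \binom{n-v}{(n-v)/2} \binom{n}{v}\, 2^{v}$. -/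
open Polynomial Finset

lemma two_X_pow (m : ℕ) :
    ((2 : ℝ[X]) * X) ^ m =
      ∑ j ∈ range (m + 1), C (m.choose j : ℝ) * Chebyshev.T ℝ ((m : ℤ) - 2 * j) := by
  induction m with
  | zero => simp [Chebyshev.T_zero]
  | succ m ih =>
    have key : ∀ i : ℤ, 2 * X * Chebyshev.T ℝ i =
        Chebyshev.T ℝ (i + 1) + Chebyshev.T ℝ (i - 1) := by
      intro i
      have := Chebyshev.T_add_one ℝ i
      linear_combination -this
    have S1S2 : ∑ j ∈ range (m + 2), C ((m+1).choose j : ℝ) * Chebyshev.T ℝ (((m:ℤ) + 1) - 2 * j)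
        = (∑ j ∈ range (m + 1), C (m.choose j : ℝ) * Chebyshev.T ℝ (((m:ℤ) + 1) - 2 * j))
          + ∑ j ∈ range (m + 1), C (m.choose j : ℝ) * Chebyshev.T ℝ (((m:ℤ) + 1) - 2 * (j + 1)) := by
      rw [Finset.sum_range_succ' (fun j => C ((m+1).choose j : ℝ) * Chebyshev.T ℝ (((m:ℤ) + 1) - 2 * j)) (m+1)]
      push_cast
      have e2 : ∀ j ∈ range (m+1),
          C ((m+1).choose (j+1) : ℝ) * Chebyshev.T ℝ (((m:ℤ) + 1) - 2 * (j+1))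
          = C (m.choose j : ℝ) * Chebyshev.T ℝ (((m:ℤ) + 1) - 2 * (j+1))
            + C (m.choose (j+1) : ℝ) * Chebyshev.T ℝ (((m:ℤ) + 1) - 2 * (j+1)) := by
        intro j _
        rw [Nat.choose_succ_succ]
        push_cast
        rw [C_add]
        ring
      rw [Finset.sum_congr rfl e2, Finset.sum_add_distrib]
      have e3 := Finset.sum_range_succ' (fun j => C (m.choose j : ℝ) * Chebyshev.T ℝ ((m:ℤ) + 1 - 2*j)) (m+1)
      have e4 := Finset.sum_range_succ (fun j => C (m.choose j : ℝ) * Chebyshev.T ℝ ((m:ℤ) + 1 - 2*j)) (m+1)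
      simp only [Nat.choose_succ_self, Nat.cast_zero, map_zero, zero_mul, add_zero] at e4
      simp only [Nat.choose_zero_right, Nat.cast_one, map_one, one_mul] at e3 ⊢
      push_cast at e3 e4 ⊢
      linear_combination e4 - e3
    calc ((2 : ℝ[X]) * X) ^ (m + 1) = (2 * X) * ((2 * X) ^ m) := by ring
      _ = ∑ j ∈ range (m + 1), C (m.choose j : ℝ) *
            (Chebyshev.T ℝ ((m : ℤ) - 2 * j + 1) + Chebyshev.T ℝ ((m : ℤ) - 2 * j - 1)) := by
          rw [ih, Finset.mul_sum]
          refine Finset.sum_congr rfl fun j _ => ?_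
          rw [← key]; ring
      _ = (∑ j ∈ range (m + 1), C (m.choose j : ℝ) * Chebyshev.T ℝ (((m:ℤ) + 1) - 2 * j))
          + ∑ j ∈ range (m + 1), C (m.choose j : ℝ) * Chebyshev.T ℝ (((m:ℤ) + 1) - 2 * (j + 1)) := by
          rw [← Finset.sum_add_distrib]
          refine Finset.sum_congr rfl fun j _ => ?_
          rw [mul_add]
          congr 3 <;> ring
      _ = ∑ j ∈ range (m + 2), C ((m+1).choose j : ℝ) * Chebyshev.T ℝ (((m:ℤ) + 1) - 2 * j) := S1S2.symm
      _ = _ := by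
          refine Finset.sum_congr rfl fun j _ => ?_
          congr 2
          all_goals (push_cast; ring)

lemma comb (n : ℕ) :
    ∑ v ∈ range (n + 1), ∑ m ∈ range (n - v + 1),
        C ((n.choose v : ℝ) * ((n - v).choose m : ℝ) * 2 ^ v) *
          (Chebyshev.T ℝ (((n - v : ℕ) : ℤ) - 2 * m)).comp (2 * X - 1)
    = ∑ k ∈ range (n + 1),
        C ((if k < n then (2 : ℝ) else 1) *
            ∑ v ∈ (range (k + 1)).filter (fun v => (k - v) % 2 = 0),
              ((n - v).choose ((k - v) / 2) : ℝ) * (n.choose v : ℝ) * 2 ^ v) *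
          (Chebyshev.T ℝ ((n - k : ℕ) : ℤ)).comp (2 * X - 1) := by
  classical
  set P : ℤ → ℝ[X] := fun i => (Chebyshev.T ℝ i).comp (2 * X - 1) with hP
  -- d is the basic right-hand summand
  set d : ℕ → ℕ → ℝ[X] := fun k v =>
    C (((n - v).choose ((k - v) / 2) : ℝ) * (n.choose v : ℝ) * 2 ^ v) * P ((n - k : ℕ) : ℤ) with hd
  set g : ℕ → ℕ → ℝ[X] := fun v m =>
    C ((n.choose v : ℝ) * ((n - v).choose m : ℝ) * 2 ^ v) * P (((n - v : ℕ) : ℤ) - 2 * m) with hg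
  have hRHS : ∑ k ∈ range (n + 1),
        C ((if k < n then (2 : ℝ) else 1) *
            ∑ v ∈ (range (k + 1)).filter (fun v => (k - v) % 2 = 0),
              ((n - v).choose ((k - v) / 2) : ℝ) * (n.choose v : ℝ) * 2 ^ v) * P ((n - k : ℕ) : ℤ)
      = (∑ k ∈ range (n + 1), ∑ v ∈ (range (k + 1)).filter (fun v => (k - v) % 2 = 0), d k v)
        + ∑ k ∈ range n, ∑ v ∈ (range (k + 1)).filter (fun v => (k - v) % 2 = 0), d k v := by
    have expand : ∀ k, C ((if k < n then (2 : ℝ) else 1) *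
            ∑ v ∈ (range (k + 1)).filter (fun v => (k - v) % 2 = 0),
              ((n - v).choose ((k - v) / 2) : ℝ) * (n.choose v : ℝ) * 2 ^ v) * P ((n - k : ℕ) : ℤ)
        = (∑ v ∈ (range (k + 1)).filter (fun v => (k - v) % 2 = 0), d k v)
          + (if k < n then (∑ v ∈ (range (k + 1)).filter (fun v => (k - v) % 2 = 0), d k v) else 0) := by
      intro k
      have base : C (∑ v ∈ (range (k + 1)).filter (fun v => (k - v) % 2 = 0),
              ((n - v).choose ((k - v) / 2) : ℝ) * (n.choose v : ℝ) * 2 ^ v) * P ((n - k : ℕ) : ℤ)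
          = ∑ v ∈ (range (k + 1)).filter (fun v => (k - v) % 2 = 0), d k v := by
        rw [map_sum, Finset.sum_mul]
      split_ifs with h
      · rw [two_mul, C_add, add_mul, base]
      · rw [one_mul, base, add_zero]
    rw [Finset.sum_congr rfl (fun k _ => expand k), Finset.sum_add_distrib]
    congr 1
    rw [Finset.sum_range_succ, if_neg (lt_irrefl n), add_zero]
    exact Finset.sum_congr rfl fun k hk => if_pos (mem_range.mp hk)
  rw [hRHS]
  -- split the LHS according to v + 2m ≤ n
  rw [Finset.sum_sigma' (range (n + 1)) (fun v => range (n - v + 1)) (fun v m => g v m)]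
  rw [← Finset.sum_filter_add_sum_filter_not
      ((range (n + 1)).sigma fun v => range (n - v + 1)) (fun x => x.1 + 2 * x.2 ≤ n)]
  congr 1
  · -- the part with v + 2m ≤ n
    rw [Finset.sum_sigma' (range (n + 1))
      (fun k => (range (k + 1)).filter (fun v => (k - v) % 2 = 0)) (fun k v => d k v)]
    refine Finset.sum_nbij' (fun x => ⟨x.1 + 2 * x.2, x.1⟩) (fun y => ⟨y.2, (y.1 - y.2) / 2⟩)
      ?_ ?_ ?_ ?_ ?_
    · rintro ⟨v, m⟩ hx
      simp only [Finset.mem_filter, Finset.mem_sigma, Finset.mem_range] at hx ⊢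
      omega
    · rintro ⟨k, v⟩ hy
      simp only [Finset.mem_filter, Finset.mem_sigma, Finset.mem_range] at hy ⊢
      omega
    · rintro ⟨v, m⟩ hx
      simp only [Finset.mem_filter, Finset.mem_sigma, Finset.mem_range] at hx
      simp only [Sigma.mk.inj_iff, heq_eq_eq, true_and, and_true]
      omega
    · rintro ⟨k, v⟩ hy
      simp only [Finset.mem_filter, Finset.mem_sigma, Finset.mem_range] at hy
      simp only [Sigma.mk.inj_iff, heq_eq_eq, true_and, and_true]
      omega
    · rintro ⟨v, m⟩ hx
      simp only [Finset.mem_filter, Finset.mem_sigma, Finset.mem_range] at hx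
      simp only [hd, hg, hP]
      have h1 : (v + 2 * m - v) / 2 = m := by omega
      have h2 : (((n - v : ℕ) : ℤ) - 2 * m) = ((n - (v + 2 * m) : ℕ) : ℤ) := by omega
      rw [h1, h2]
      ring
  · -- the part with v + 2m > n
    rw [Finset.sum_sigma' (range n)
      (fun k => (range (k + 1)).filter (fun v => (k - v) % 2 = 0)) (fun k v => d k v)]
    refine Finset.sum_nbij' (fun x => ⟨2 * n - x.1 - 2 * x.2, x.1⟩)
      (fun y => ⟨y.2, (n - y.2) - (y.1 - y.2) / 2⟩) ?_ ?_ ?_ ?_ ?_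
    · rintro ⟨v, m⟩ hx
      simp only [Finset.mem_filter, Finset.mem_sigma, Finset.mem_range] at hx ⊢
      omega
    · rintro ⟨k, v⟩ hy
      simp only [Finset.mem_filter, Finset.mem_sigma, Finset.mem_range] at hy ⊢
      omega
    · rintro ⟨v, m⟩ hx
      simp only [Finset.mem_filter, Finset.mem_sigma, Finset.mem_range] at hx
      simp only [Sigma.mk.inj_iff, heq_eq_eq, true_and, and_true]
      omega
    · rintro ⟨k, v⟩ hy
      simp only [Finset.mem_filter, Finset.mem_sigma, Finset.mem_range] at hy
      simp only [Sigma.mk.inj_iff, heq_eq_eq, true_and, and_true]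
      omega
    · rintro ⟨v, m⟩ hx
      simp only [Finset.mem_filter, Finset.mem_sigma, Finset.mem_range] at hx
      simp only [hd, hg, hP]
      have h1 : (2 * n - v - 2 * m - v) / 2 = n - v - m := by omega
      have h2 : (n - v).choose (n - v - m) = (n - v).choose m :=
        Nat.choose_symm (by omega)
      have h3 : (((n - v : ℕ) : ℤ) - 2 * m) = -(((n - (2 * n - v - 2 * m) : ℕ) : ℤ)) := by omega
      rw [h1, h2, h3, Chebyshev.T_neg]
      ring

lemma two_mul_pow_comp (p : ℕ) :
    ((2 : ℝ[X]) * (2 * X - 1)) ^ p =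
      ∑ j ∈ range (p + 1), C (p.choose j : ℝ) *
        (Chebyshev.T ℝ ((p : ℤ) - 2 * j)).comp (2 * X - 1) := by
  have h := congrArg (fun q : ℝ[X] => q.comp (2 * X - 1)) (two_X_pow p)
  simpa using h

lemma eqA (n : ℕ) :
    ((4 : ℝ[X]) * X) ^ n =
      ∑ v ∈ range (n + 1), ∑ m ∈ range (n - v + 1),
        C ((n.choose v : ℝ) * ((n - v).choose m : ℝ) * 2 ^ v) *
          (Chebyshev.T ℝ (((n - v : ℕ) : ℤ) - 2 * m)).comp (2 * X - 1) := by
  have h4 : ((4 : ℝ[X]) * X) ^ n = ((2 : ℝ[X]) + 2 * (2 * X - 1)) ^ n := by ring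
  rw [h4, add_pow]
  refine Finset.sum_congr rfl fun v hv => ?_
  rw [two_mul_pow_comp (n - v), Finset.mul_sum, Finset.sum_mul]
  refine Finset.sum_congr rfl fun m hm => ?_
  simp only [C_mul, C_pow, C_eq_natCast, map_ofNat]
  ring

theorem monomial_in_shifted_chebT (n : ℕ) :
    (X : ℝ[X]) ^ n =
      ∑ k ∈ range (n + 1),
        C (if k < n then
             (2 : ℝ) ^ (1 - 2 * (n : ℤ)) *
               ∑ v ∈ (range (k + 1)).filter (fun v => (k - v) % 2 = 0),
                 ((n - v).choose ((k - v) / 2) : ℝ) * (n.choose v : ℝ) * 2 ^ v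
           else
             (2 : ℝ) ^ (-(2 * (n : ℤ))) *
               ∑ v ∈ (range (k + 1)).filter (fun v => (k - v) % 2 = 0),
                 ((n - v).choose ((k - v) / 2) : ℝ) * (n.choose v : ℝ) * 2 ^ v) *
        (Polynomial.Chebyshev.T ℝ ((n - k : ℕ) : ℤ)).comp (2 * X - 1) := by
  have h2 : (2 : ℝ) ≠ 0 := two_ne_zero
  have hc : (C ((2 : ℝ) ^ (2 * n)) : ℝ[X]) ≠ 0 := by
    simp [pow_ne_zero]
  refine mul_left_cancel₀ hc ?_
  calc C ((2 : ℝ) ^ (2 * n)) * (X : ℝ[X]) ^ n = ((4 : ℝ[X]) * X) ^ n := by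
        have : ((2 : ℝ) ^ (2 * n)) = (4 : ℝ) ^ n := by rw [pow_mul]; norm_num
        rw [this, map_pow, map_ofNat, mul_pow]
    _ = ∑ v ∈ range (n + 1), ∑ m ∈ range (n - v + 1),
          C ((n.choose v : ℝ) * ((n - v).choose m : ℝ) * 2 ^ v) *
            (Chebyshev.T ℝ (((n - v : ℕ) : ℤ) - 2 * m)).comp (2 * X - 1) := eqA n
    _ = ∑ k ∈ range (n + 1),
          C ((if k < n then (2 : ℝ) else 1) *
              ∑ v ∈ (range (k + 1)).filter (fun v => (k - v) % 2 = 0),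
                ((n - v).choose ((k - v) / 2) : ℝ) * (n.choose v : ℝ) * 2 ^ v) *
            (Chebyshev.T ℝ ((n - k : ℕ) : ℤ)).comp (2 * X - 1) := comb n
    _ = _ := by
        rw [Finset.mul_sum]
        refine Finset.sum_congr rfl fun k hk => ?_
        rw [← mul_assoc, ← C_mul]
        congr 2
        have e1 : (2 : ℝ) ^ (2 * n) * (2 : ℝ) ^ (1 - 2 * (n : ℤ)) = 2 := by
          rw [← zpow_natCast (2 : ℝ) (2 * n), ← zpow_add₀ h2]
          norm_num
        have e2 : (2 : ℝ) ^ (2 * n) * (2 : ℝ) ^ (-(2 * (n : ℤ))) = 1 := by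
          rw [← zpow_natCast (2 : ℝ) (2 * n), ← zpow_add₀ h2]
          norm_num
        split_ifs with h
        · rw [← mul_assoc, e1]
        · rw [← mul_assoc, e2]
end

section
/- For every natural number $n$, the identity of polynomials $x^n = \sum_{k=0}^{n} \Big( 2^{-2n}\,(1+n-k)\, n! \sum_{0 \leq v \leq k,\; k-v \text{ even}} \frac{2^{v}}{(2)_{\,n - (v+k)/2}\; v!\; ((k-v)/2)!} \Big) U_{n-k}(2x-1)$ holds in $\mathbb{R}[x]$. -/
open Polynomial Finset Nat

lemma asc_eval_two (s : ℕ) : (ascPochhammer ℝ s).eval 2 = (s+1).factorial := by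
  induction s with
  | zero => simp [ascPochhammer_zero]
  | succ s ih =>
    rw [ascPochhammer_succ_eval, ih]
    push_cast [Nat.factorial_succ]
    ring

noncomputable def Tm (m k j : ℕ) : ℝ :=
  2^(k-2*j) / ((m+1+j).factorial * ((k-2*j).factorial * j.factorial))

noncomputable def Gm (m K : ℕ) : ℕ → ℝ := fun i => -(4*(i:ℝ)*((m:ℝ)+1+i)) * Tm m K i

lemma tele_core (m j a : ℕ) (c1 c2 : ℝ)
    (hc1 : c1 = ((a:ℝ)+2*j+2)*(2*m+(a+2*j+2)+2))
    (hc2 : c2 = 2*(2*(m:ℝ)+2*(a+2*j+2)+1)) :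
    c1 * (2^(a+2)/((m+1+j).factorial*((a+2).factorial*j.factorial)))
      - c2 * (2^(a+1)/((m+1+j).factorial*((a+1).factorial*j.factorial)))
    = (-(4*((j:ℝ)+1)*((m:ℝ)+1+(j+1)))) * (2^a/((m+1+(j+1)).factorial*(a.factorial*(j+1).factorial)))
      - (-(4*(j:ℝ)*((m:ℝ)+1+j))) * (2^(a+2)/((m+1+j).factorial*((a+2).factorial*j.factorial))) := by
  subst hc1 hc2
  have h1 : ((m+1+j).factorial : ℝ) ≠ 0 := by positivity
  have h2 : ((a).factorial : ℝ) ≠ 0 := by positivity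
  have h3 : ((j).factorial : ℝ) ≠ 0 := by positivity
  rw [show m+1+(j+1) = (m+1+j)+1 by ring, Nat.factorial_succ (m+1+j),
      Nat.factorial_succ (a+1), Nat.factorial_succ a, Nat.factorial_succ j]
  push_cast
  field_simp
  ring

lemma sum_of_tele (f g : ℕ → ℝ) (n : ℕ)
    (h : ∀ j < n, f j = g (j+1) - g j) (h0 : g 0 = 0) :
    ∑ j ∈ range n, f j = g n := by
  have : ∑ j ∈ range n, f j = ∑ j ∈ range n, (g (j+1) - g j) :=
    Finset.sum_congr rfl fun j hj => h j (mem_range.mp hj)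
  rw [this, Finset.sum_range_sub, h0, sub_zero]

lemma rec_step (m k : ℕ) :
    ((k:ℝ)+1)*(2*m+k+3) * ∑ j ∈ range ((k+1)/2+1), Tm m (k+1) j
    = 2*(2*(m:ℝ)+2*k+3) * ∑ j ∈ range (k/2+1), Tm m k j := by
  rcases Nat.even_or_odd k with he | ho
  · obtain ⟨s, rfl⟩ : ∃ s, k = 2*s := by obtain ⟨s, hs⟩ := he; exact ⟨s, by omega⟩
    rw [show (2*s+1)/2+1 = s+1 by omega, show (2*s)/2+1 = s+1 by omega]
    rw [mul_sum, mul_sum, ← sub_eq_zero, ← Finset.sum_sub_distrib,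
        Finset.sum_range_succ]
    rw [sum_of_tele _ (Gm m (2*s+1)) s ?tele (by simp [Gm])]
    case tele =>
      intro j hj
      obtain ⟨d, rfl⟩ : ∃ d, s = j + 1 + d := ⟨s - j - 1, by omega⟩
      simp only [Tm, Gm]
      rw [show 2*(j+1+d)+1 - 2*j = (2*d+1)+2 by omega,
          show 2*(j+1+d) - 2*j = (2*d+1)+1 by omega,
          show 2*(j+1+d)+1 - 2*(j+1) = 2*d+1 by omega]
      push_cast
      linear_combination tele_core m j (2*d+1)
        ((2*(d:ℝ)+2*↑j+3)*(2*↑m+2*↑d+2*↑j+5)) (2*(2*(m:ℝ)+4*↑d+4*↑j+7))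
        (by push_cast; ring) (by push_cast; ring)
    · simp only [Tm, Gm]
      rw [show 2*s+1 - 2*s = 1 by omega, show 2*s - 2*s = 0 by omega]
      have h1 : ((m+1+s).factorial : ℝ) ≠ 0 := by positivity
      have h3 : ((s).factorial : ℝ) ≠ 0 := by positivity
      push_cast
      field_simp
      ring
  · obtain ⟨s, rfl⟩ : ∃ s, k = 2*s+1 := by obtain ⟨s, hs⟩ := ho; exact ⟨s, by omega⟩
    rw [show (2*s+1+1)/2+1 = s+2 by omega, show (2*s+1)/2+1 = s+1 by omega]
    rw [mul_sum, mul_sum, ← sub_eq_zero, Finset.sum_range_succ (n := s+1),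
        show ∀ a b c : ℝ, a + b - c = (a - c) + b from fun a b c => by ring,
        ← Finset.sum_sub_distrib]
    rw [sum_of_tele _ (Gm m (2*s+1+1)) (s+1) ?tele2 (by simp [Gm])]
    case tele2 =>
      intro j hj
      obtain ⟨d, rfl⟩ : ∃ d, s = j + d := ⟨s - j, by omega⟩
      simp only [Tm, Gm]
      rw [show 2*(j+d)+1+1 - 2*j = (2*d)+2 by omega,
          show 2*(j+d)+1 - 2*j = (2*d)+1 by omega,
          show 2*(j+d)+1+1 - 2*(j+1) = 2*d by omega]
      push_cast
      linear_combination tele_core m j (2*d)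
        ((2*(d:ℝ)+2*↑j+2)*(2*↑m+2*↑d+2*↑j+4)) (2*(2*(m:ℝ)+4*↑d+4*↑j+5))
        (by push_cast; ring) (by push_cast; ring)
    · simp only [Tm, Gm]
      rw [show 2*s+1+1 - 2*(s+1) = 0 by omega]
      have h1 : ((m+1+(s+1)).factorial : ℝ) ≠ 0 := by positivity
      have h3 : (((s+1)).factorial : ℝ) ≠ 0 := by positivity
      push_cast
      field_simp
      ring

lemma key_s15 (m k : ℕ) :
    ∑ j ∈ range (k/2+1), Tm m k j
    = 2*((2*m+2*k+1).factorial:ℝ)/((m+k).factorial * k.factorial * (2*m+k+2).factorial) := by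
  induction k with
  | zero =>
    simp only [Tm, Nat.zero_div, zero_add, Finset.sum_range_one]
    rw [show 2*m+2*0+1 = 2*m+1 by ring, show 2*m+0+2 = (2*m+1)+1 by ring,
        show m+0 = m by ring, Nat.factorial_succ (2*m+1), show m+1+0 = m+1 by ring,
        Nat.factorial_succ m]
    have h1 : ((m).factorial : ℝ) ≠ 0 := by positivity
    have h2 : ((2*m+1).factorial : ℝ) ≠ 0 := by positivity
    push_cast
    field_simp
    ring
  | succ k ih =>
    have hc : ((k:ℝ)+1)*(2*(m:ℝ)+↑k+3) ≠ 0 := by positivity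
    apply mul_left_cancel₀ hc
    have h := rec_step m k
    push_cast at h ⊢
    rw [h, ih]
    rw [show 2*m+2*(k+1)+1 = ((2*m+2*k+1)+1)+1 by ring, Nat.factorial_succ ((2*m+2*k+1)+1),
        Nat.factorial_succ (2*m+2*k+1),
        show m+(k+1) = (m+k)+1 by ring, Nat.factorial_succ (m+k),
        Nat.factorial_succ k,
        show 2*m+(k+1)+2 = (2*m+k+2)+1 by ring, Nat.factorial_succ (2*m+k+2)]
    have h1 : ((m+k).factorial : ℝ) ≠ 0 := by positivity
    have h2 : ((k).factorial : ℝ) ≠ 0 := by positivity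
    have h3 : ((2*m+k+2).factorial : ℝ) ≠ 0 := by positivity
    have h4 : ((2*m+2*k+1).factorial : ℝ) ≠ 0 := by positivity
    push_cast
    field_simp
    ring

noncomputable def ee (n : ℕ) (k : ℤ) : ℝ :=
  if 0 ≤ k ∧ k ≤ n then
    2*((n:ℝ)+1-k)*((2*n+1).factorial:ℝ) /
      ((k.toNat.factorial:ℝ) * ((2*(n:ℤ)+2-k).toNat.factorial:ℝ))
  else 0

lemma ee_neg (n : ℕ) (k : ℤ) (h : k < 0) : ee n k = 0 := by
  rw [ee, if_neg]; omega

lemma ee_nat (n j : ℕ) (h : j ≤ n+1) :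
    ee n j = 2*((n:ℝ)+1-j)*((2*n+1).factorial:ℝ) /
      ((j.factorial:ℝ) * ((2*n+2-j).factorial:ℝ)) := by
  rcases Nat.lt_or_ge n j with hlt | hle
  · have hj : j = n+1 := by omega
    subst hj
    rw [ee, if_neg (by push_cast; omega)]
    have : ((n:ℝ)+1-↑(n+1)) = 0 := by push_cast; ring
    rw [this]
    ring
  · rw [ee, if_pos ⟨by positivity, by exact_mod_cast hle⟩]
    have h1 : ((j:ℤ)).toNat = j := by omega
    have h2 : ((2*(n:ℤ)+2-(j:ℤ))).toNat = 2*n+2-j := by omega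
    rw [h1, h2]
    push_cast
    ring

lemma pascal (n : ℕ) (k : ℤ) (h0 : 0 ≤ k) (h1 : k ≤ n+1) :
    ee (n+1) k = ee n k + 2*ee n (k-1) + ee n (k-2) := by
  obtain ⟨j, rfl⟩ : ∃ j : ℕ, k = (j:ℤ) := ⟨k.toNat, by omega⟩
  match j with
  | 0 =>
    rw [show ((0:ℕ):ℤ)-1 = -1 by ring, show ((0:ℕ):ℤ)-2 = -2 by ring,
        ee_neg n (-1) (by norm_num), ee_neg n (-2) (by norm_num),
        ee_nat (n+1) 0 (by omega), ee_nat n 0 (by omega)]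
    rw [show (2*(n+1)+2-0).factorial
          = (2*n+4)*((2*n+3)*((2*n+2)*(2*n+1).factorial)) from by
        rw [show 2*(n+1)+2-0 = ((2*n+1)+1+1)+1 by omega, Nat.factorial_succ,
            Nat.factorial_succ, Nat.factorial_succ],
        show (2*(n+1)+1).factorial = (2*n+3)*((2*n+2)*(2*n+1).factorial) from by
        rw [show 2*(n+1)+1 = ((2*n+1)+1)+1 by omega, Nat.factorial_succ,
            Nat.factorial_succ],
        show (2*n+2-0).factorial = (2*n+2)*(2*n+1).factorial from by
        rw [show 2*n+2-0 = (2*n+1)+1 by omega, Nat.factorial_succ]]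
    have hf : ((2*n+1).factorial : ℝ) ≠ 0 := by positivity
    push_cast
    field_simp
    ring
  | 1 =>
    rw [show ((1:ℕ):ℤ)-1 = ((0:ℕ):ℤ) by norm_num, show ((1:ℕ):ℤ)-2 = -1 by norm_num,
        ee_neg n (-1) (by norm_num),
        ee_nat (n+1) 1 (by omega), ee_nat n 1 (by omega), ee_nat n 0 (by omega)]
    rw [show (2*(n+1)+2-1).factorial = (2*n+3)*((2*n+2)*(2*n+1).factorial) from by
        rw [show 2*(n+1)+2-1 = ((2*n+1)+1)+1 by omega, Nat.factorial_succ,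
            Nat.factorial_succ],
        show (2*(n+1)+1).factorial = (2*n+3)*((2*n+2)*(2*n+1).factorial) from by
        rw [show 2*(n+1)+1 = ((2*n+1)+1)+1 by omega, Nat.factorial_succ,
            Nat.factorial_succ],
        show (2*n+2-1).factorial = (2*n+1).factorial from by
        rw [show 2*n+2-1 = 2*n+1 by omega],
        show (2*n+2-0).factorial = (2*n+2)*(2*n+1).factorial from by
        rw [show 2*n+2-0 = (2*n+1)+1 by omega, Nat.factorial_succ]]
    have hf : ((2*n+1).factorial : ℝ) ≠ 0 := by positivity
    push_cast
    field_simp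
    ring
  | (i+2) =>
    obtain ⟨d, rfl⟩ : ∃ d, n = i + 1 + d := ⟨n - i - 1, by omega⟩
    rw [show ((i+2:ℕ):ℤ)-1 = ((i+1:ℕ):ℤ) by push_cast; ring,
        show ((i+2:ℕ):ℤ)-2 = ((i:ℕ):ℤ) by push_cast; ring,
        ee_nat (i+1+d+1) (i+2) (by omega), ee_nat (i+1+d) (i+2) (by omega),
        ee_nat (i+1+d) (i+1) (by omega), ee_nat (i+1+d) i (by omega)]
    rw [show (2*(i+1+d+1)+1).factorial
          = (2*i+2*d+5)*((2*i+2*d+4)*(2*i+2*d+3).factorial) from by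
        rw [show 2*(i+1+d+1)+1 = ((2*i+2*d+3)+1)+1 by omega, Nat.factorial_succ,
            Nat.factorial_succ],
        show (2*(i+1+d+1)+2-(i+2)).factorial
          = (i+2*d+4)*((i+2*d+3)*(i+2*d+2).factorial) from by
        rw [show 2*(i+1+d+1)+2-(i+2) = ((i+2*d+2)+1)+1 by omega, Nat.factorial_succ,
            Nat.factorial_succ],
        show (2*(i+1+d)+1).factorial = (2*i+2*d+3).factorial from by
        rw [show 2*(i+1+d)+1 = 2*i+2*d+3 by omega],
        show (2*(i+1+d)+2-(i+2)).factorial = (i+2*d+2).factorial from by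
        rw [show 2*(i+1+d)+2-(i+2) = i+2*d+2 by omega],
        show (2*(i+1+d)+2-(i+1)).factorial = (i+2*d+3)*(i+2*d+2).factorial from by
        rw [show 2*(i+1+d)+2-(i+1) = (i+2*d+2)+1 by omega, Nat.factorial_succ],
        show (2*(i+1+d)+2-i).factorial
          = (i+2*d+4)*((i+2*d+3)*(i+2*d+2).factorial) from by
        rw [show 2*(i+1+d)+2-i = ((i+2*d+2)+1)+1 by omega, Nat.factorial_succ,
            Nat.factorial_succ],
        show (i+2).factorial = (i+2)*((i+1)*i.factorial) from by
        rw [Nat.factorial_succ, Nat.factorial_succ],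
        show (i+1).factorial = (i+1)*i.factorial from Nat.factorial_succ i]
    have h1 : ((2*i+2*d+3).factorial : ℝ) ≠ 0 := by positivity
    have h2 : ((i+2*d+2).factorial : ℝ) ≠ 0 := by positivity
    have h3 : ((i).factorial : ℝ) ≠ 0 := by positivity
    push_cast
    field_simp
    ring

noncomputable def uu (i : ℤ) : ℝ[X] := (Polynomial.Chebyshev.U ℝ i).comp (2*X-1)

lemma uu_neg_one : uu (-1) = 0 := by
  simp [uu, Polynomial.Chebyshev.U_neg_one]

lemma uu_zero : uu 0 = 1 := by
  simp [uu, Polynomial.Chebyshev.U_zero]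

lemma X_mul_uu (i : ℤ) : (X:ℝ[X]) * uu i = C (1/4:ℝ) * (uu (i+1) + 2*uu i + uu (i-1)) := by
  have h : uu (i+1) = (2*(2*X-1)) * uu i - uu (i-1) := by
    simp only [uu, Polynomial.Chebyshev.U_add_one ℝ i, sub_comp, mul_comp, X_comp,
      ofNat_comp]
    norm_num
  rw [h]
  have hC : (C (1/4:ℝ)) * 4 = 1 := by
    rw [show (4:ℝ[X]) = C 4 from (map_ofNat (C : ℝ →+* ℝ[X]) 4).symm, ← C_mul]
    norm_num
  linear_combination (-(X * uu i)) * hC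

lemma ee_zero_zero : ee 0 0 = 1 := by
  rw [show (0:ℤ) = ((0:ℕ):ℤ) by norm_num, ee_nat 0 0 (by omega)]
  norm_num [Nat.factorial]

lemma ee_top (n : ℕ) : ee n ((n+1:ℕ):ℤ) = 0 := by
  rw [ee_nat n (n+1) le_rfl]
  have h : ((n:ℝ)+1-↑(n+1)) = 0 := by push_cast; ring
  rw [h]
  simp

lemma poly_expand (n : ℕ) :
    (X:ℝ[X])^n = ∑ k ∈ range (n+1), C (ee n k / 4^n) * uu ((n:ℤ) - k) := by
  induction n with
  | zero =>
    rw [Finset.sum_range_one]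
    norm_num [ee_zero_zero, uu_zero]
  | succ n ih =>
    have h4 : (4:ℝ)^n ≠ 0 := by positivity
    have step1 : (X:ℝ[X])^(n+1)
        = ∑ k ∈ range (n+1), (C (ee n k / 4^(n+1)) * uu ((n:ℤ)-k+1)
            + C (2*ee n k / 4^(n+1)) * uu ((n:ℤ)-k)
            + C (ee n k / 4^(n+1)) * uu ((n:ℤ)-k-1)) := by
      have : (X:ℝ[X])^(n+1) = ∑ k ∈ range (n+1), C (ee n k / 4^n) * (X * uu ((n:ℤ)-k)) := by
        rw [pow_succ, mul_comm ((X:ℝ[X])^n) X, ih, Finset.mul_sum]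
        exact Finset.sum_congr rfl fun k _ => by ring
      rw [this]
      refine Finset.sum_congr rfl fun k _ => ?_
      rw [X_mul_uu]
      have e1 : C (ee n k / 4^n) * C (1/4:ℝ) = C (ee n k / 4^(n+1)) := by
        rw [← C_mul]
        congr 1
        rw [pow_succ]
        ring
      have e2 : C (2*ee n k/4^(n+1)) = 2 * C (ee n k/4^(n+1)) := by
        rw [show (2:ℝ[X]) = C 2 from (map_ofNat (C : ℝ →+* ℝ[X]) 2).symm, ← C_mul]
        congr 1
        ring
      rw [← mul_assoc, e1, e2]
      ring
    rw [step1, Finset.sum_add_distrib, Finset.sum_add_distrib]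
    have hS1 : ∑ k ∈ range (n+2), C (ee n k / 4^(n+1)) * uu (((n+1:ℕ):ℤ)-k)
        = ∑ k ∈ range (n+1), C (ee n k / 4^(n+1)) * uu ((n:ℤ)-k+1) := by
      rw [Finset.sum_range_succ, ee_top n]
      norm_num
      exact Finset.sum_congr rfl fun k _ => by
        congr 1
        push_cast
        ring
    have hS2 : ∑ k ∈ range (n+2), C (2*ee n ((k:ℤ)-1) / 4^(n+1)) * uu (((n+1:ℕ):ℤ)-k)
        = ∑ k ∈ range (n+1), C (2*ee n k / 4^(n+1)) * uu ((n:ℤ)-k) := by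
      rw [Finset.sum_range_succ' _ (n+1)]
      have h0 : C (2*ee n (((0:ℕ):ℤ)-1) / 4^(n+1)) * uu (((n+1:ℕ):ℤ)-(0:ℕ)) = 0 := by
        rw [ee_neg n _ (by norm_num)]
        norm_num
      rw [h0, add_zero]
      exact Finset.sum_congr rfl fun k _ => by
        have a1 : ((k+1:ℕ):ℤ)-1 = (k:ℤ) := by push_cast; ring
        have a2 : (((n+1:ℕ)):ℤ)-((k+1:ℕ):ℤ) = (n:ℤ)-k := by push_cast; ring
        rw [a1, a2]
    have hS3 : ∑ k ∈ range (n+2), C (ee n ((k:ℤ)-2) / 4^(n+1)) * uu (((n+1:ℕ):ℤ)-k)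
        = ∑ k ∈ range (n+1), C (ee n k / 4^(n+1)) * uu ((n:ℤ)-k-1) := by
      rw [Finset.sum_range_succ' _ (n+1)]
      have h0 : C (ee n (((0:ℕ):ℤ)-2) / 4^(n+1)) * uu (((n+1:ℕ):ℤ)-(0:ℕ)) = 0 := by
        rw [ee_neg n _ (by norm_num)]
        norm_num
      rw [h0, add_zero, Finset.sum_range_succ' _ n]
      have h1 : C (ee n (((0+1:ℕ):ℤ)-2) / 4^(n+1)) * uu (((n+1:ℕ):ℤ)-((0+1:ℕ):ℤ)) = 0 := by
        rw [ee_neg n _ (by norm_num)]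
        norm_num
      rw [h1, add_zero]
      rw [Finset.sum_range_succ (n := n) (f := fun k => C (ee n k / 4^(n+1)) * uu ((n:ℤ)-k-1))]
      have h2 : C (ee n ((n:ℕ):ℤ) / 4^(n+1)) * uu ((n:ℤ)-(n:ℕ)-1) = 0 := by
        rw [show ((n:ℤ)-(n:ℕ)-1) = -1 by push_cast; ring, uu_neg_one, mul_zero]
      rw [h2, add_zero]
      exact Finset.sum_congr rfl fun k _ => by
        have a1 : ((k+1+1:ℕ):ℤ)-2 = (k:ℤ) := by push_cast; ring
        have a2 : (((n+1:ℕ)):ℤ)-((k+1+1:ℕ):ℤ) = (n:ℤ)-k-1 := by push_cast; ring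
        rw [a1, a2]
    rw [← hS1, ← hS2, ← hS3, ← Finset.sum_add_distrib, ← Finset.sum_add_distrib]
    refine Finset.sum_congr rfl fun k hk => ?_
    have hk' : (k:ℤ) ≤ n+1 := by
      simp only [mem_range] at hk
      exact_mod_cast by omega
    have hp := pascal n (k:ℤ) (by positivity) hk'
    rw [hp]
    rw [show (ee n ↑k + 2*ee n ((k:ℤ)-1) + ee n ((k:ℤ)-2)) / 4^(n+1)
        = ee n ↑k/4^(n+1) + 2*ee n ((k:ℤ)-1)/4^(n+1) + ee n ((k:ℤ)-2)/4^(n+1) by ring,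
       C_add, C_add]
    ring

lemma inner_eq (n k : ℕ) (hk : k ≤ n) :
    ∑ v ∈ (range (k+1)).filter (fun v => (k-v) % 2 = 0),
      (2:ℝ)^v / ((ascPochhammer ℝ (n - (v+k)/2)).eval 2 * v.factorial * ((k-v)/2).factorial)
    = ∑ j ∈ range (k/2+1), Tm (n-k) k j := by
  refine Finset.sum_nbij' (fun v => (k-v)/2) (fun j => k - 2*j) ?_ ?_ ?_ ?_ ?_
  · intro v hv
    simp only [mem_filter, mem_range] at hv
    simp only [mem_range]
    omega
  · intro j hj
    simp only [mem_range] at hj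
    simp only [mem_filter, mem_range]
    omega
  · intro v hv
    simp only [mem_filter, mem_range] at hv
    omega
  · intro j hj
    simp only [mem_range] at hj
    omega
  · intro v hv
    simp only [mem_filter, mem_range] at hv
    rw [asc_eval_two]
    simp only [Tm]
    rw [show k - 2*((k-v)/2) = v by omega,
        show (n - (v+k)/2) + 1 = (n-k)+1+((k-v)/2) by omega]
    ring

theorem monomial_in_shifted_chebU (n : ℕ) :
    (X : ℝ[X]) ^ n =
      ∑ k ∈ range (n + 1),
        C ((2 : ℝ) ^ (-(2 * (n : ℤ))) * (1 + (n : ℝ) - k) * n.factorial *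
           ∑ v ∈ (range (k + 1)).filter (fun v => (k - v) % 2 = 0),
             (2 : ℝ) ^ v /
               ((ascPochhammer ℝ (n - (v + k) / 2)).eval (2 : ℝ) *
                v.factorial * ((k - v) / 2).factorial)) *
        (Polynomial.Chebyshev.U ℝ ((n - k : ℕ) : ℤ)).comp (2 * X - 1) := by
  rw [poly_expand n]
  refine Finset.sum_congr rfl fun k hk => ?_
  simp only [mem_range] at hk
  have hkn : k ≤ n := by omega
  have harg : ((n - k : ℕ) : ℤ) = (n:ℤ) - k := by
    push_cast [Nat.cast_sub hkn]
    ring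
  rw [harg]
  show C (ee n k / 4^n) * uu ((n:ℤ)-k) = _ * uu ((n:ℤ)-k)
  congr 2
  rw [inner_eq n k hkn, key_s15 (n-k) k]
  rw [show 2*(n-k)+2*k+1 = 2*n+1 by omega, show (n-k)+k = n by omega,
      show 2*(n-k)+k+2 = 2*n+2-k by omega]
  rw [ee_nat n k (by omega)]
  have hpow : (2:ℝ)^(-(2*(n:ℤ))) = ((4:ℝ)^n)⁻¹ := by
    rw [show -(2*(n:ℤ)) = -((2*n:ℕ):ℤ) by push_cast; ring, zpow_neg, zpow_natCast,
        pow_mul]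
    norm_num
  rw [hpow]
  have h1 : ((n.factorial:ℝ)) ≠ 0 := by positivity
  have h2 : ((k.factorial:ℝ)) ≠ 0 := by positivity
  have h3 : (((2*n+2-k).factorial:ℝ)) ≠ 0 := by positivity
  have h4 : ((4:ℝ)^n) ≠ 0 := by positivity
  field_simp
  ring
end
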